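/- arXiv:2312.08691 — 2 statements merged into one kernel-verified Lean document; each statement's English description precedes it below -/
import Mathlib

section
/- Let A = (a_{ij}) be an n×n real matrix such that D(A) belongs to the class 𝒟, D(A) is strongly connected, and Δ_A ≠ 0. Let B = (b_{ij}) be the n×n matrix with entries b_{ij} = μ_{ij}/Δ_A. Then ABA = A. -/
open Matrix

/-- Adjacency in a digraph given by relation `G`: a 2-cycle between distinct `i` and `j`. -/
def Adjd {n : ℕ} (G : Fin n → Fin n → Prop) (i j : Fin n) : Prop :=
  i ≠ j ∧ G i j ∧ G j i

/-- `G` is a simple symmetric digraph: no loops and edges come in both directions. -/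
def IsSSD {n : ℕ} (G : Fin n → Fin n → Prop) : Prop :=
  (∀ i, ¬ G i i) ∧ ∀ i j, G i j → G j i

/-- A vertex is pendant if it is incident to exactly one 2-cycle. -/
def Pendant {n : ℕ} (G : Fin n → Fin n → Prop) (i : Fin n) : Prop :=
  ∃! j, Adjd G i j

/-- The class 𝒟: simple symmetric digraphs in which every non-pendant vertex is
adjacent to at least one pendant vertex. -/
def InClassD {n : ℕ} (G : Fin n → Fin n → Prop) : Prop :=
  IsSSD G ∧ ∀ i, ¬ Pendant G i → ∃ j, Adjd G i j ∧ Pendant G j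

/-- Strong connectivity: a directed path from every vertex to every other vertex. -/
def StronglyConnected {n : ℕ} (G : Fin n → Fin n → Prop) : Prop :=
  ∀ i j : Fin n, Relation.ReflTransGen G i j

/-- An unordered pair `e` is a 2-cycle of `G`. -/
def IsEdge {n : ℕ} (G : Fin n → Fin n → Prop) (e : Sym2 (Fin n)) : Prop :=
  ∃ i j, e = s(i, j) ∧ Adjd G i j

/-- A matching: a set of pairwise vertex-disjoint 2-cycles. -/
def IsMatching {n : ℕ} (G : Fin n → Fin n → Prop) (M : Finset (Sym2 (Fin n))) : Prop :=
  (∀ e ∈ M, IsEdge G e) ∧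
  ∀ e ∈ M, ∀ f ∈ M, e ≠ f → ∀ v : Fin n, v ∈ e → v ∉ f

/-- A maximum matching: a matching of maximum cardinality. -/
def IsMaxMatching {n : ℕ} (G : Fin n → Fin n → Prop) (M : Finset (Sym2 (Fin n))) : Prop :=
  IsMatching G M ∧ ∀ M', IsMatching G M' → M'.card ≤ M.card

/-- A cycle chain, recorded by its list of (distinct) vertices `i₁, …, i_{m+1}`. -/
def IsCycleChain {n : ℕ} (G : Fin n → Fin n → Prop) (c : List (Fin n)) : Prop :=
  c.Nodup ∧ 2 ≤ c.length ∧ c.Chain' (Adjd G)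

/-- A cycle chain from `i` to `j`. -/
def IsCycleChainBtw {n : ℕ} (G : Fin n → Fin n → Prop) (i j : Fin n) (c : List (Fin n)) : Prop :=
  IsCycleChain G c ∧ c.head? = some i ∧ c.getLast? = some j

/-- The list of 2-cycles of a cycle chain. -/
def chainEdges {n : ℕ} (c : List (Fin n)) : List (Sym2 (Fin n)) :=
  List.zipWith (fun a b => s(a, b)) c c.tail

/-- The cycle chain `c` is alternating with respect to `M`: its 2-cycles are alternately
in `M` and outside `M`, with the first and last 2-cycle in `M` (so its length is odd). -/
def IsAltChain {n : ℕ} (M : Finset (Sym2 (Fin n))) (c : List (Fin n)) : Prop :=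
  Odd (chainEdges c).length ∧
  ∀ k (h : k < (chainEdges c).length), ((chainEdges c).get ⟨k, h⟩ ∈ M ↔ Even k)

/-- The digraph of a square matrix: edge `(i,j)` iff `A i j ≠ 0`. -/
def DA {n : ℕ} (A : Matrix (Fin n) (Fin n) ℝ) : Fin n → Fin n → Prop :=
  fun i j => A i j ≠ 0

/-- The cycle product `a_{ij} a_{ji}` of a 2-cycle. -/
def cycProd {n : ℕ} (A : Matrix (Fin n) (Fin n) ℝ) (e : Sym2 (Fin n)) : ℝ :=
  Sym2.lift ⟨fun i j => A i j * A j i, fun i j => mul_comm _ _⟩ e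

/-- The matching product η(M) of a matching `M`. -/
noncomputable def matchProd {n : ℕ} (A : Matrix (Fin n) (Fin n) ℝ)
    (M : Finset (Sym2 (Fin n))) : ℝ :=
  ∏ e ∈ M, cycProd A e

/-- The (finite) collection of all maximum matchings of `D(A)`. -/
noncomputable def maxMatchings {n : ℕ} (A : Matrix (Fin n) (Fin n) ℝ) :
    Finset (Finset (Sym2 (Fin n))) :=
  {M | IsMaxMatching (DA A) M}.toFinite.toFinset

/-- Δ_A: the sum of the matching products over all maximum matchings of `D(A)`. -/
noncomputable def Delta {n : ℕ} (A : Matrix (Fin n) (Fin n) ℝ) : ℝ :=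
  ∑ M ∈ maxMatchings A, matchProd A M

/-- 𝕄(i,j): maximum matchings with respect to which some cycle chain from `i` to `j`
is an alternating cycle chain. -/
def MMset {n : ℕ} (A : Matrix (Fin n) (Fin n) ℝ) (i j : Fin n) :
    Set (Finset (Sym2 (Fin n))) :=
  {M | IsMaxMatching (DA A) M ∧ ∃ c, IsCycleChainBtw (DA A) i j c ∧ IsAltChain M c}

/-- `i` and `j` are maximally matchable: 𝕄(i,j) ≠ ∅. -/
def MaxMatchable {n : ℕ} (A : Matrix (Fin n) (Fin n) ℝ) (i j : Fin n) : Prop :=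
  (MMset A i j).Nonempty

open scoped Classical in
/-- The (unique) alternating cycle chain from `i` to `j`, when it exists. -/
noncomputable def theChain {n : ℕ} (A : Matrix (Fin n) (Fin n) ℝ) (i j : Fin n) :
    List (Fin n) :=
  if h : ∃ c, IsCycleChainBtw (DA A) i j c ∧ ∃ M ∈ MMset A i j, IsAltChain M c
  then h.choose else []

/-- The path product along a cycle chain: `a_{i₁ i₂} a_{i₂ i₃} ⋯ a_{i_m i_{m+1}}`. -/
def pathProd {n : ℕ} (A : Matrix (Fin n) (Fin n) ℝ) (c : List (Fin n)) : ℝ :=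
  (List.zipWith (fun a b => A a b) c c.tail).prod

open scoped Classical in
/-- β_{ij} = (−1)^{(m−1)/2} P_m(i,j) for maximally matchable `i, j`, and `0` otherwise. -/
noncomputable def beta {n : ℕ} (A : Matrix (Fin n) (Fin n) ℝ) (i j : Fin n) : ℝ :=
  if MaxMatchable A i j then
    (-1 : ℝ) ^ (((theChain A i j).length - 2) / 2) * pathProd A (theChain A i j)
  else 0

/-- β̄_{i,j}(M): product of the cycle products of the 2-cycles of `M` not contained in
the alternating cycle chain from `i` to `j`. -/
noncomputable def betaBar {n : ℕ} (A : Matrix (Fin n) (Fin n) ℝ) (i j : Fin n)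
    (M : Finset (Sym2 (Fin n))) : ℝ :=
  ∏ e ∈ M.filter (fun e => e ∉ chainEdges (theChain A i j)), cycProd A e

/-- μ_{ij} = β_{ij} · Σ_{M ∈ 𝕄(i,j)} β̄_{i,j}(M). -/
noncomputable def mu {n : ℕ} (A : Matrix (Fin n) (Fin n) ℝ) (i j : Fin n) : ℝ :=
  beta A i j * ∑ M ∈ (MMset A i j).toFinite.toFinset, betaBar A i j M

/-- `X` is a group inverse of `A`. -/
def IsGroupInverse {n : ℕ} (A X : Matrix (Fin n) (Fin n) ℝ) : Prop :=
  A * X * A = A ∧ X * A * X = X ∧ A * X = X * A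

/-- A tree digraph: strongly connected and all of its cycles have length 2. -/
def IsTreeDigraph {n : ℕ} (G : Fin n → Fin n → Prop) : Prop :=
  StronglyConnected G ∧
  ∀ (a : Fin n) (l : List (Fin n)), (a :: l).Nodup → List.Chain G a l →
    G ((a :: l).getLast (List.cons_ne_nil a l)) a → (a :: l).length = 2

/-- A star tree digraph: a tree digraph with a center adjacent to every other vertex,
every other vertex being adjacent only to the center. -/
def IsStarTree {n : ℕ} (G : Fin n → Fin n → Prop) : Prop :=
  IsTreeDigraph G ∧
  ∃ c : Fin n, (∀ j, j ≠ c → Adjd G c j) ∧ ∀ i j, Adjd G i j → i = c ∨ j = c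

/-- A corona digraph: a simple symmetric digraph in which each non-pendant vertex is
adjacent to exactly one pendant vertex. -/
def IsCorona {n : ℕ} (G : Fin n → Fin n → Prop) : Prop :=
  IsSSD G ∧ ∀ i, ¬ Pendant G i → ∃! j, Adjd G i j ∧ Pendant G j

/-- 𝕄(i): the maximum matchings in which vertex `i` is matched. -/
noncomputable def MMi {n : ℕ} (A : Matrix (Fin n) (Fin n) ℝ) (i : Fin n) :
    Finset (Finset (Sym2 (Fin n))) :=
  {M | IsMaxMatching (DA A) M ∧ ∃ e ∈ M, i ∈ e}.toFinite.toFinset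
namespace ABAproof
open Finset
open scoped Classical

@[simp] lemma cycProd_mk {n : ℕ} (A : Matrix (Fin n) (Fin n) ℝ) (i j : Fin n) :
    cycProd A s(i, j) = A i j * A j i := rfl

lemma Adjd_symm {n : ℕ} {G : Fin n → Fin n → Prop} {i j : Fin n} (h : Adjd G i j) :
    Adjd G j i := ⟨Ne.symm h.1, h.2.2, h.2.1⟩

variable {n : ℕ}

noncomputable def pnbr (A : Matrix (Fin n) (Fin n) ℝ) (p : Fin n) : Fin n :=
  if h : Pendant (DA A) p then h.choose else p

noncomputable def Nf (A : Matrix (Fin n) (Fin n) ℝ) : Finset (Fin n) :=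
  univ.filter (fun u => ¬ Pendant (DA A) u)

noncomputable def PN (A : Matrix (Fin n) (Fin n) ℝ) (u : Fin n) : Finset (Fin n) :=
  univ.filter (fun p => Pendant (DA A) p ∧ Adjd (DA A) u p)

noncomputable def Sv (A : Matrix (Fin n) (Fin n) ℝ) (u : Fin n) : ℝ :=
  ∑ p ∈ PN A u, A u p * A p u

noncomputable def mOf (A : Matrix (Fin n) (Fin n) ℝ) (f : Fin n → Fin n) :
    Finset (Sym2 (Fin n)) :=
  (Nf A).image (fun u => s(u, f u))

variable {A : Matrix (Fin n) (Fin n) ℝ}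

lemma mem_Nf {u : Fin n} : u ∈ Nf A ↔ ¬ Pendant (DA A) u := by simp [Nf]

lemma mem_PN {u p : Fin n} : p ∈ PN A u ↔ Pendant (DA A) p ∧ Adjd (DA A) u p := by
  simp [PN]

lemma diag_zero (hD : IsSSD (DA A)) (i : Fin n) : A i i = 0 := by
  by_contra h; exact hD.1 i h

lemma adj_of_ne_zero (hD : IsSSD (DA A)) {i j : Fin n} (hij : i ≠ j) (h : A i j ≠ 0) :
    Adjd (DA A) i j := ⟨hij, h, hD.2 i j h⟩

lemma pnbr_adj {p : Fin n} (hp : Pendant (DA A) p) : Adjd (DA A) p (pnbr A p) := by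
  rw [pnbr, dif_pos hp]; exact hp.choose_spec.1

lemma pnbr_uniq {p j : Fin n} (hp : Pendant (DA A) p) (h : Adjd (DA A) p j) :
    j = pnbr A p := by
  rw [pnbr, dif_pos hp]; exact hp.choose_spec.2 j h

lemma pnbr_ne {p : Fin n} (hp : Pendant (DA A) p) : pnbr A p ≠ p :=
  Ne.symm (pnbr_adj hp).1

/-- entries out of a pendant vertex vanish except towards its neighbour -/
lemma pendant_row_zero (hD : IsSSD (DA A)) {p x : Fin n} (hp : Pendant (DA A) p)
    (hx : x ≠ pnbr A p) : A p x = 0 := by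
  by_contra h
  rcases eq_or_ne p x with rfl | hpx
  · exact hD.1 p h
  · exact hx (pnbr_uniq hp (adj_of_ne_zero hD hpx h))

lemma pendant_col_zero (hD : IsSSD (DA A)) {p x : Fin n} (hp : Pendant (DA A) p)
    (hx : x ≠ pnbr A p) : A x p = 0 := by
  by_contra h
  rcases eq_or_ne x p with rfl | hpx
  · exact hD.1 _ h
  · exact hx (pnbr_uniq hp (Adjd_symm (adj_of_ne_zero hD hpx h)))

lemma mem_PN_iff (hD : IsSSD (DA A)) {u p : Fin n} (hp : Pendant (DA A) p) :
    p ∈ PN A u ↔ pnbr A p = u := by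
  rw [mem_PN]
  constructor
  · rintro ⟨-, h⟩; exact (pnbr_uniq hp (Adjd_symm h)).symm
  · rintro rfl; exact ⟨hp, Adjd_symm (pnbr_adj hp)⟩

end ABAproof
namespace ABAproof
open Finset
open scoped Classical

variable {n : ℕ} {A : Matrix (Fin n) (Fin n) ℝ}

lemma edge_adj {G : Fin n → Fin n → Prop} {a b : Fin n} (h : IsEdge G s(a, b)) :
    Adjd G a b := by
  obtain ⟨i, j, he, hadj⟩ := h
  rw [Sym2.eq_iff] at he
  rcases he with ⟨rfl, rfl⟩ | ⟨rfl, rfl⟩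
  · exact hadj
  · exact Adjd_symm hadj

/-- choice functions describing maximum matchings -/
def goodf (A : Matrix (Fin n) (Fin n) ℝ) (f : Fin n → Fin n) : Prop :=
  (∀ u ∈ Nf A, f u ∈ PN A u) ∧ ∀ u ∉ Nf A, f u = u

lemma goodf_pendant {f : Fin n → Fin n} (hf : goodf A f) {u : Fin n} (hu : u ∈ Nf A) :
    Pendant (DA A) (f u) := (mem_PN.1 (hf.1 u hu)).1

lemma goodf_adj {f : Fin n → Fin n} (hf : goodf A f) {u : Fin n} (hu : u ∈ Nf A) :
    Adjd (DA A) u (f u) := (mem_PN.1 (hf.1 u hu)).2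

lemma goodf_injOn {f : Fin n → Fin n} (hf : goodf A f) {u w : Fin n}
    (hu : u ∈ Nf A) (hw : w ∈ Nf A) (h : s(u, f u) = s(w, f w)) : u = w := by
  rw [Sym2.eq_iff] at h
  rcases h with ⟨rfl, -⟩ | ⟨h1, -⟩
  · rfl
  · exact absurd (goodf_pendant hf hw) (by rw [← h1] at *; exact mem_Nf.1 hu)

lemma mem_mOf {f : Fin n → Fin n} {e : Sym2 (Fin n)} :
    e ∈ mOf A f ↔ ∃ u ∈ Nf A, e = s(u, f u) := by
  simp [mOf, eq_comm]

lemma card_mOf {f : Fin n → Fin n} (hf : goodf A f) : (mOf A f).card = (Nf A).card :=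
  card_image_of_injOn fun u hu w hw h => goodf_injOn hf hu hw h

lemma isMatching_mOf {f : Fin n → Fin n} (hf : goodf A f) :
    IsMatching (DA A) (mOf A f) := by
  constructor
  · rintro e he
    obtain ⟨u, hu, rfl⟩ := mem_mOf.1 he
    exact ⟨u, f u, rfl, goodf_adj hf hu⟩
  · rintro e he e' he' hne v hv hv'
    obtain ⟨u, hu, rfl⟩ := mem_mOf.1 he
    obtain ⟨w, hw, rfl⟩ := mem_mOf.1 he'
    have huw : u ≠ w := fun h => hne (by rw [h])
    rw [Sym2.mem_iff] at hv hv'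
    have hfu : Pendant (DA A) (f u) := goodf_pendant hf hu
    have hfw : Pendant (DA A) (f w) := goodf_pendant hf hw
    rcases hv with rfl | rfl <;> rcases hv' with h | h
    · exact huw h
    · exact (mem_Nf.1 hu) (h ▸ hfw)
    · exact (mem_Nf.1 hw) (h ▸ goodf_pendant hf hu)
    · have h1 : u = pnbr A (f u) := pnbr_uniq hfu (Adjd_symm (goodf_adj hf hu))
      have h2 : w = pnbr A (f w) := pnbr_uniq hfw (Adjd_symm (goodf_adj hf hw))
      exact huw (by rw [h1, h2, h])

/-- a chosen non-pendant vertex of an edge -/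
noncomputable def npick (A : Matrix (Fin n) (Fin n) ℝ) (e : Sym2 (Fin n)) : Fin n :=
  if h : ∃ v, v ∈ e ∧ ¬ Pendant (DA A) v then h.choose else (Quot.out e).1

lemma npick_spec (hnp : ∀ p q, Pendant (DA A) p → Pendant (DA A) q →
    ¬ Adjd (DA A) p q) {e : Sym2 (Fin n)} (he : IsEdge (DA A) e) :
    npick A e ∈ e ∧ ¬ Pendant (DA A) (npick A e) := by
  obtain ⟨i, j, rfl, hadj⟩ := he
  have h : ∃ v, v ∈ s(i, j) ∧ ¬ Pendant (DA A) v := by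
    by_cases hi : Pendant (DA A) i
    · by_cases hj : Pendant (DA A) j
      · exact absurd hadj (hnp i j hi hj)
      · exact ⟨j, by simp, hj⟩
    · exact ⟨i, by simp, hi⟩
  rw [npick, dif_pos h]
  exact h.choose_spec

lemma matching_card_le (hnp : ∀ p q, Pendant (DA A) p → Pendant (DA A) q →
    ¬ Adjd (DA A) p q) {M : Finset (Sym2 (Fin n))} (hM : IsMatching (DA A) M) :
    M.card ≤ (Nf A).card := by
  apply card_le_card_of_injOn (npick A)
  · intro e he
    exact mem_Nf.2 (npick_spec hnp (hM.1 e he)).2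
  · intro e he e' he' h
    by_contra hne
    exact hM.2 e he e' he' hne _ (npick_spec hnp (hM.1 e he)).1
      (h ▸ (npick_spec hnp (hM.1 e' he')).1)

lemma exists_goodf (hD : InClassD (DA A)) : ∃ f, goodf A f := by
  refine ⟨fun u => if h : ¬ Pendant (DA A) u then (hD.2 u h).choose else u, ?_, ?_⟩
  · intro u hu
    have h := mem_Nf.1 hu
    simp only [dif_pos h]
    have := (hD.2 u h).choose_spec
    exact mem_PN.2 ⟨this.2, this.1⟩
  · intro u hu
    rw [mem_Nf, not_not] at hu
    exact dif_neg (not_not_intro hu)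

lemma isMax_mOf (hnp : ∀ p q, Pendant (DA A) p → Pendant (DA A) q →
    ¬ Adjd (DA A) p q) {f : Fin n → Fin n} (hf : goodf A f) :
    IsMaxMatching (DA A) (mOf A f) :=
  ⟨isMatching_mOf hf, fun M' hM' => (matching_card_le hnp hM').trans (card_mOf hf).ge⟩

lemma maxMatching_card (hD : InClassD (DA A)) (hnp : ∀ p q, Pendant (DA A) p →
    Pendant (DA A) q → ¬ Adjd (DA A) p q) {M : Finset (Sym2 (Fin n))}
    (hM : IsMaxMatching (DA A) M) : M.card = (Nf A).card := by
  obtain ⟨f, hf⟩ := exists_goodf hD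
  exact le_antisymm (matching_card_le hnp hM.1)
    ((card_mOf hf) ▸ hM.2 _ (isMatching_mOf hf))

end ABAproof
namespace ABAproof
open Finset
open scoped Classical

variable {n : ℕ} {A : Matrix (Fin n) (Fin n) ℝ}

lemma pendant_unmatched {M : Finset (Sym2 (Fin n))} (hM : IsMatching (DA A) M)
    {p : Fin n} (hp : Pendant (DA A) p) (h : s(p, pnbr A p) ∉ M) :
    ∀ e ∈ M, p ∉ e := by
  intro e he hpe
  obtain ⟨x, y, rfl, hadj⟩ := hM.1 e he
  rw [Sym2.mem_iff] at hpe
  rcases hpe with rfl | rfl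
  · refine h ?_
    rw [pnbr_uniq hp hadj] at he
    exact he
  · refine h ?_
    rw [Sym2.eq_swap] at he
    rw [pnbr_uniq hp (Adjd_symm hadj)] at he
    exact he

lemma max_edge_struct (hD : InClassD (DA A)) (hnp : ∀ p q, Pendant (DA A) p →
    Pendant (DA A) q → ¬ Adjd (DA A) p q) {M : Finset (Sym2 (Fin n))}
    (hM : IsMaxMatching (DA A) M) {e : Sym2 (Fin n)} (he : e ∈ M) :
    ∃ u p, e = s(u, p) ∧ ¬ Pendant (DA A) u ∧ p ∈ PN A u := by
  obtain ⟨a, b, rfl, hadj⟩ := hM.1.1 _ he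
  have hab : a ≠ b := hadj.1
  by_cases hb : Pendant (DA A) b
  · have ha : ¬ Pendant (DA A) a := fun ha => hnp a b ha hb hadj
    exact ⟨a, b, rfl, ha, mem_PN.2 ⟨hb, hadj⟩⟩
  by_cases ha : Pendant (DA A) a
  · exact ⟨b, a, Sym2.eq_swap.symm, hb, mem_PN.2 ⟨ha, Adjd_symm hadj⟩⟩
  exfalso
  obtain ⟨p0, hp0adj, hp0⟩ := hD.2 a ha
  obtain ⟨q0, hq0adj, hq0⟩ := hD.2 b hb
  have hp0a : pnbr A p0 = a := (pnbr_uniq hp0 (Adjd_symm hp0adj)).symm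
  have hq0b : pnbr A q0 = b := (pnbr_uniq hq0 (Adjd_symm hq0adj)).symm
  have hap0 : a ≠ p0 := fun h => ha (h ▸ hp0)
  have hbp0 : b ≠ p0 := fun h => hb (h ▸ hp0)
  have haq0 : a ≠ q0 := fun h => ha (h ▸ hq0)
  have hbq0 : b ≠ q0 := fun h => hb (h ▸ hq0)
  have hpq : p0 ≠ q0 := fun h => hab (by rw [← hp0a, ← hq0b, h])
  have hpM : s(p0, a) ∉ M := by
    intro hmem
    have hne : s(a, b) ≠ s(p0, a) := by
      simp [Sym2.eq_iff, hap0, hbp0]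
    exact hM.1.2 _ he _ hmem hne a (by simp) (by simp [hap0])
  have hqM : s(q0, b) ∉ M := by
    intro hmem
    have hne : s(a, b) ≠ s(q0, b) := by
      simp [Sym2.eq_iff, haq0, hbq0]
    exact hM.1.2 _ he _ hmem hne b (by simp) (by simp [hbq0, hab])
  have hp0un : ∀ e' ∈ M, p0 ∉ e' :=
    pendant_unmatched hM.1 hp0 (by rwa [hp0a])
  have hq0un : ∀ e' ∈ M, q0 ∉ e' :=
    pendant_unmatched hM.1 hq0 (by rwa [hq0b])
  have hFa : ∀ f ∈ M.erase s(a, b), a ∉ f := fun f hf =>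
    hM.1.2 _ he _ (mem_of_mem_erase hf) (Ne.symm (ne_of_mem_erase hf)) a (by simp)
  have hFb : ∀ f ∈ M.erase s(a, b), b ∉ f := fun f hf =>
    hM.1.2 _ he _ (mem_of_mem_erase hf) (Ne.symm (ne_of_mem_erase hf)) b (by simp)
  set M' := insert s(a, p0) (insert s(b, q0) (M.erase s(a, b))) with hM'def
  have hne1 : s(a, p0) ≠ s(b, q0) := by
    simp [Sym2.eq_iff, hab, haq0]
  have h1 : s(b, q0) ∉ M.erase s(a, b) := fun h =>
    hq0un _ (mem_of_mem_erase h) (by simp)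
  have h2 : s(a, p0) ∉ insert s(b, q0) (M.erase s(a, b)) := by
    simp only [mem_insert]
    rintro (h | h)
    · exact hne1 h
    · exact hp0un _ (mem_of_mem_erase h) (by simp)
  have hcard : M'.card = M.card + 1 := by
    rw [hM'def, card_insert_of_notMem h2, card_insert_of_notMem h1,
      card_erase_of_mem he]
    have : 1 ≤ M.card := card_pos.2 ⟨_, he⟩
    omega
  have hmatch : IsMatching (DA A) M' := by
    constructor
    · intro f hf
      rw [hM'def, mem_insert, mem_insert] at hf
      rcases hf with rfl | rfl | hf
      · exact ⟨a, p0, rfl, hp0adj⟩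
      · exact ⟨b, q0, rfl, hq0adj⟩
      · exact hM.1.1 _ (mem_of_mem_erase hf)
    · intro e1 h1' e2 h2' hne v hv1 hv2
      rw [hM'def, mem_insert, mem_insert] at h1' h2'
      rcases h1' with rfl | rfl | h1' <;> rcases h2' with rfl | rfl | h2'
      · exact hne rfl
      · rw [Sym2.mem_iff] at hv1 hv2
        rcases hv1 with rfl | rfl <;> rcases hv2 with h | h
        · exact hab h
        · exact haq0 h
        · exact hbp0 h.symm
        · exact hpq h
      · rw [Sym2.mem_iff] at hv1
        rcases hv1 with rfl | rfl
        · exact hFa _ h2' hv2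
        · exact hp0un _ (mem_of_mem_erase h2') hv2
      · rw [Sym2.mem_iff] at hv1 hv2
        rcases hv1 with rfl | rfl <;> rcases hv2 with h | h
        · exact hab h.symm
        · exact hbp0 h
        · exact haq0 h.symm
        · exact hpq h.symm
      · exact hne rfl
      · rw [Sym2.mem_iff] at hv1
        rcases hv1 with rfl | rfl
        · exact hFb _ h2' hv2
        · exact hq0un _ (mem_of_mem_erase h2') hv2
      · rw [Sym2.mem_iff] at hv2
        rcases hv2 with rfl | rfl
        · exact hFa _ h1' hv1
        · exact hp0un _ (mem_of_mem_erase h1') hv1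
      · rw [Sym2.mem_iff] at hv2
        rcases hv2 with rfl | rfl
        · exact hFb _ h1' hv1
        · exact hq0un _ (mem_of_mem_erase h1') hv1
      · exact hM.1.2 _ (mem_of_mem_erase h1') _ (mem_of_mem_erase h2') hne v hv1 hv2
  have := hM.2 M' hmatch
  omega

end ABAproof
namespace ABAproof
open Finset
open scoped Classical

variable {n : ℕ} {A : Matrix (Fin n) (Fin n) ℝ}

lemma max_eq_mOf (hD : InClassD (DA A)) (hnp : ∀ p q, Pendant (DA A) p →
    Pendant (DA A) q → ¬ Adjd (DA A) p q) {M : Finset (Sym2 (Fin n))}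
    (hM : IsMaxMatching (DA A) M) : ∃ f, goodf A f ∧ M = mOf A f := by
  have hsurj : ∀ u ∈ Nf A, ∃ p, s(u, p) ∈ M ∧ Pendant (DA A) p := by
    intro u hu
    have hcard : (Nf A).card ≤ M.card := (maxMatching_card hD hnp hM).ge
    obtain ⟨e, he, hue⟩ := Finset.surj_on_of_inj_on_of_card_le (s := M) (t := Nf A)
      (fun e _ => npick A e) (fun e he => mem_Nf.2 (npick_spec hnp (hM.1.1 e he)).2)
      (fun e e' he he' h => by
        by_contra hne
        have h' : npick A e = npick A e' := h
        exact hM.1.2 e he e' he' hne _ (npick_spec hnp (hM.1.1 e he)).1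
          (h' ▸ (npick_spec hnp (hM.1.1 e' he')).1)) hcard u hu
    obtain ⟨u', p, heq, hu', hp⟩ := max_edge_struct hD hnp hM he
    have hne2 := npick_spec hnp (hM.1.1 e he)
    have hnu' : npick A e = u' := by
      have hm : npick A e ∈ s(u', p) := by rw [← heq]; exact hne2.1
      rw [Sym2.mem_iff] at hm
      rcases hm with h' | h'
      · exact h'
      · exact absurd ((mem_PN.1 hp).1) (by rw [← h']; exact hne2.2)
    refine ⟨p, ?_, (mem_PN.1 hp).1⟩
    have heq2 : s(u, p) = e := by rw [hue, hnu', heq]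
    rw [heq2]; exact he
  set f : Fin n → Fin n :=
    fun u => if h : ∃ p, s(u, p) ∈ M ∧ Pendant (DA A) p then h.choose else u with hfdef
  have hfP : ∀ u ∈ Nf A, s(u, f u) ∈ M ∧ Pendant (DA A) (f u) := by
    intro u hu
    have h := hsurj u hu
    simp only [hfdef]
    rw [dif_pos h]
    exact h.choose_spec
  have hgf : goodf A f := by
    constructor
    · intro u hu
      obtain ⟨hmem, hp⟩ := hfP u hu
      exact mem_PN.2 ⟨hp, edge_adj (hM.1.1 _ hmem)⟩
    · intro u hu
      rw [mem_Nf, not_not] at hu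
      simp only [hfdef]
      refine dif_neg ?_
      rintro ⟨p, hmem, hp⟩
      exact hnp u p hu hp (edge_adj (hM.1.1 _ hmem))
  refine ⟨f, hgf, ?_⟩
  refine (Finset.eq_of_subset_of_card_le ?_ ?_).symm
  · intro e he
    obtain ⟨u, hu, rfl⟩ := mem_mOf.1 he
    exact (hfP u hu).1
  · rw [card_mOf hgf, maxMatching_card hD hnp hM]

end ABAproof
namespace ABAproof
open Finset
open scoped Classical

variable {n : ℕ} {A : Matrix (Fin n) (Fin n) ℝ}

lemma mem_maxMatchings {M : Finset (Sym2 (Fin n))} :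
    M ∈ maxMatchings A ↔ IsMaxMatching (DA A) M := by
  simp [maxMatchings]

lemma sum_pinned (hD : InClassD (DA A)) (hnp : ∀ p q, Pendant (DA A) p →
    Pendant (DA A) q → ¬ Adjd (DA A) p q) (K : Finset (Fin n)) (hK : K ⊆ Nf A)
    (pin : Fin n → Fin n) (hpin : ∀ u ∈ K, pin u ∈ PN A u)
    (F : Finset (Sym2 (Fin n)) → ℝ)
    (hF : ∀ f, goodf A f → (∀ u ∈ K, f u = pin u) →
      F (mOf A f) = ∏ u ∈ Nf A \ K, (A u (f u) * A (f u) u)) :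
    ∑ M ∈ (maxMatchings A).filter (fun M => ∀ u ∈ K, s(u, pin u) ∈ M), F M
      = ∏ u ∈ Nf A \ K, Sv A u := by
  set t : Fin n → Finset (Fin n) :=
    fun u => if u ∈ K then {pin u} else if u ∈ Nf A then PN A u else {u} with htdef
  set w : Fin n → Fin n → ℝ :=
    fun u v => if u ∈ Nf A \ K then A u v * A v u else 1 with hwdef
  have hgood : ∀ g ∈ Fintype.piFinset t, goodf A g ∧ ∀ u ∈ K, g u = pin u := by
    intro g hg
    rw [Fintype.mem_piFinset] at hg
    have hpins : ∀ u ∈ K, g u = pin u := by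
      intro u hu
      have := hg u
      rw [htdef] at this
      simp only [if_pos hu, mem_singleton] at this
      exact this
    refine ⟨⟨?_, ?_⟩, hpins⟩
    · intro u hu
      by_cases huK : u ∈ K
      · rw [hpins u huK]; exact hpin u huK
      · have := hg u
        rw [htdef] at this
        simp only [if_neg huK, if_pos hu] at this
        exact this
    · intro u hu
      have huK : u ∉ K := fun h => hu (hK h)
      have := hg u
      rw [htdef] at this
      simp only [if_neg huK, if_neg hu, mem_singleton] at this
      exact this
  have step1 : ∏ u ∈ Nf A \ K, Sv A u = ∏ u : Fin n, ∑ v ∈ t u, w u v := by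
    rw [← prod_subset (subset_univ (Nf A \ K))]
    · apply prod_congr rfl
      intro u hu
      rw [hwdef, htdef]
      have huK : u ∉ K := (mem_sdiff.1 hu).2
      simp only [if_neg huK, if_pos (mem_sdiff.1 hu).1, if_pos hu]
      rfl
    · intro u _ hu
      have : ∀ v ∈ t u, w u v = 1 := by
        intro v _
        rw [hwdef]; simp only [if_neg hu]
      rw [sum_congr rfl this, sum_const, nsmul_eq_mul, mul_one]
      rw [htdef]
      by_cases huK : u ∈ K
      · simp [huK]
      · have hun : u ∉ Nf A := fun h => hu (mem_sdiff.2 ⟨h, huK⟩)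
        simp [huK, hun]
  rw [step1, Finset.prod_univ_sum]
  refine (Finset.sum_bij (fun g _ => mOf A g) ?_ ?_ ?_ ?_).symm
  · intro g hg
    obtain ⟨hgf, hpins⟩ := hgood g hg
    rw [mem_filter]
    refine ⟨mem_maxMatchings.2 (isMax_mOf hnp hgf), ?_⟩
    intro u hu
    rw [← hpins u hu]
    exact mem_mOf.2 ⟨u, hK hu, rfl⟩
  · intro g₁ hg₁ g₂ hg₂ heq
    obtain ⟨hgf₁, -⟩ := hgood g₁ hg₁
    obtain ⟨hgf₂, -⟩ := hgood g₂ hg₂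
    funext u
    by_cases hu : u ∈ Nf A
    · have heq' : mOf A g₁ = mOf A g₂ := heq
      have h1 : s(u, g₁ u) ∈ mOf A g₂ := heq' ▸ mem_mOf.2 ⟨u, hu, rfl⟩
      obtain ⟨v, hv, hveq⟩ := mem_mOf.1 h1
      rw [Sym2.eq_iff] at hveq
      rcases hveq with ⟨rfl, h⟩ | ⟨h1', h2'⟩
      · exact h
      · exact absurd (goodf_pendant hgf₂ hv) (by rw [← h1']; exact mem_Nf.1 hu)
    · rw [hgf₁.2 u hu, hgf₂.2 u hu]
  · intro M hM
    rw [mem_filter] at hM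
    obtain ⟨f, hgf, rfl⟩ := max_eq_mOf hD hnp (mem_maxMatchings.1 hM.1)
    refine ⟨f, ?_, rfl⟩
    rw [Fintype.mem_piFinset]
    intro u
    rw [htdef]
    by_cases huK : u ∈ K
    · simp only [if_pos huK, mem_singleton]
      have hmem := hM.2 u huK
      obtain ⟨v, hv, hveq⟩ := mem_mOf.1 hmem
      rw [Sym2.eq_iff] at hveq
      rcases hveq with ⟨rfl, h⟩ | ⟨h1', h2'⟩
      · exact h.symm
      · exact absurd (goodf_pendant hgf hv)
          (by rw [← h1']; exact mem_Nf.1 (hK huK))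
    · by_cases hu : u ∈ Nf A
      · simp only [if_neg huK, if_pos hu]
        exact hgf.1 u hu
      · simp only [if_neg huK, if_neg hu, mem_singleton]
        exact hgf.2 u hu
  · intro g hg
    obtain ⟨hgf, hpins⟩ := hgood g hg
    rw [hF g hgf hpins]
    rw [← prod_subset (subset_univ (Nf A \ K))]
    · apply prod_congr rfl
      intro u hu
      rw [hwdef]
      simp only [if_pos hu]
    · intro u _ hu
      rw [hwdef]
      simp only [if_neg hu]

lemma Delta_eq (hD : InClassD (DA A)) (hnp : ∀ p q, Pendant (DA A) p →
    Pendant (DA A) q → ¬ Adjd (DA A) p q) : Delta A = ∏ u ∈ Nf A, Sv A u := by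
  have h := sum_pinned hD hnp ∅ (empty_subset _) id (by simp) (matchProd A) ?_
  · rw [sdiff_empty] at h
    rw [filter_true_of_mem (fun M _ => fun u hu => absurd hu (notMem_empty u))] at h
    exact h
  · intro f hgf _
    rw [sdiff_empty, matchProd, mOf]
    rw [prod_image (fun u hu v hv h => goodf_injOn hgf hu hv h)]
    apply prod_congr rfl
    intro u _
    rw [cycProd_mk]

lemma Sv_ne (hD : InClassD (DA A)) (hnp : ∀ p q, Pendant (DA A) p →
    Pendant (DA A) q → ¬ Adjd (DA A) p q) (hΔ : Delta A ≠ 0) {u : Fin n}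
    (hu : u ∈ Nf A) : Sv A u ≠ 0 := by
  rw [Delta_eq hD hnp] at hΔ
  exact Finset.prod_ne_zero_iff.1 hΔ u hu

end ABAproof
namespace ABAproof
open Finset
open scoped Classical

variable {n : ℕ} {A : Matrix (Fin n) (Fin n) ℝ}

lemma chainEdges_length (c : List (Fin n)) : (chainEdges c).length = c.length - 1 := by
  simp [chainEdges]

lemma chainEdges_get (c : List (Fin n)) (k : ℕ) (h : k < (chainEdges c).length) :
    (chainEdges c).get ⟨k, h⟩
      = s(c.get ⟨k, by rw [chainEdges_length] at h; omega⟩,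
          c.get ⟨k + 1, by rw [chainEdges_length] at h; omega⟩) := by
  simp [chainEdges, List.getElem_zipWith, List.getElem_tail]

lemma head_eq {c : List (Fin n)} {a : Fin n} (h : c.head? = some a) (h2 : 0 < c.length) :
    c.get ⟨0, h2⟩ = a := by
  cases c with
  | nil => simp at h2
  | cons x l => simpa using h

lemma last_eq {c : List (Fin n)} {a : Fin n} (h : c.getLast? = some a) (h2 : 0 < c.length) :
    c.get ⟨c.length - 1, by omega⟩ = a := by
  rw [List.getLast?_eq_getLast (List.ne_nil_of_length_pos h2)] at h
  rw [List.get_eq_getElem, ← List.getLast_eq_getElem (List.ne_nil_of_length_pos h2)]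
  exact Option.some_injective _ h

/-- classification of alternating cycle chains w.r.t. a maximum matching,
in the case where no two pendant vertices are adjacent. -/
lemma chain_classify (hD : InClassD (DA A)) (hnp : ∀ p q, Pendant (DA A) p →
    Pendant (DA A) q → ¬ Adjd (DA A) p q) {M : Finset (Sym2 (Fin n))}
    (hM : IsMaxMatching (DA A) M) {i j : Fin n} {c : List (Fin n)}
    (hc : IsCycleChainBtw (DA A) i j c) (halt : IsAltChain M c) :
    (c = [i, j] ∧ s(i, j) ∈ M) ∨
    (∃ u w, c = [i, u, w, j] ∧ s(i, u) ∈ M ∧ s(w, j) ∈ M ∧ s(u, w) ∉ M ∧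
      Pendant (DA A) i ∧ Pendant (DA A) j ∧ ¬ Pendant (DA A) u ∧ ¬ Pendant (DA A) w ∧
      pnbr A i = u ∧ pnbr A j = w ∧ Adjd (DA A) u w ∧ u ≠ w ∧ i ≠ j) := by
  obtain ⟨⟨hnd, hlen, hch⟩, hhead, hlast⟩ := hc
  have hgetinj := List.nodup_iff_injective_get.1 hnd
  have hchain := List.isChain_iff_getElem.1 hch
  -- pendant endpoints of an M-edge of the chain force short chains
  have key : ∀ (k : ℕ) (hk : k + 1 < c.length),
      s(c.get ⟨k, by omega⟩, c.get ⟨k+1, by omega⟩) ∈ M →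
      (0 < k → ¬ Pendant (DA A) (c.get ⟨k, by omega⟩)) ∧
      (k + 2 < c.length → ¬ Pendant (DA A) (c.get ⟨k+1, by omega⟩)) := by
    intro k hk hmem
    constructor
    · intro hpos hpend
      have h1 : Adjd (DA A) (c.get ⟨k-1, by omega⟩) (c.get ⟨k, by omega⟩) := by
        have := hchain (k-1) (by omega)
        simp only [List.get_eq_getElem]
        convert this using 3
        omega
      have h2 : Adjd (DA A) (c.get ⟨k, by omega⟩) (c.get ⟨k+1, by omega⟩) :=
        hchain k (by omega)
      have e1 := pnbr_uniq hpend (Adjd_symm h1)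
      have e2 := pnbr_uniq hpend h2
      have : c.get ⟨k-1, by omega⟩ = c.get ⟨k+1, by omega⟩ := by rw [e1, ← e2]
      have := hgetinj this
      simp only [Fin.mk.injEq] at this
      omega
    · intro hk2 hpend
      have h1 : Adjd (DA A) (c.get ⟨k, by omega⟩) (c.get ⟨k+1, by omega⟩) :=
        hchain k (by omega)
      have h2 : Adjd (DA A) (c.get ⟨k+1, by omega⟩) (c.get ⟨k+2, by omega⟩) :=
        hchain (k+1) (by omega)
      have e1 := pnbr_uniq hpend (Adjd_symm h1)
      have e2 := pnbr_uniq hpend h2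
      have : c.get ⟨k, by omega⟩ = c.get ⟨k+2, by omega⟩ := by rw [e1, ← e2]
      have := hgetinj this
      simp only [Fin.mk.injEq] at this
      omega
  -- the chain has length 2 or 4
  have hmlen : c.length = 2 ∨ c.length = 4 := by
    by_contra hcon
    push_neg at hcon
    have hodd := halt.1
    rw [chainEdges_length] at hodd
    have h6 : 6 ≤ c.length := by
      rcases hodd with ⟨t, ht⟩
      omega
    -- edge at index 2 is in M
    have hlt : 2 < (chainEdges c).length := by rw [chainEdges_length]; omega
    have hmem : (chainEdges c).get ⟨2, hlt⟩ ∈ M := (halt.2 2 hlt).2 (by decide)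
    rw [chainEdges_get] at hmem
    -- one endpoint is pendant
    obtain ⟨u, p, heq, hu, hp⟩ := max_edge_struct hD hnp hM hmem
    rw [Sym2.eq_iff] at heq
    have hpend : Pendant (DA A) (c.get ⟨2, by omega⟩) ∨
        Pendant (DA A) (c.get ⟨3, by omega⟩) := by
      rcases heq with ⟨h1, h2⟩ | ⟨h1, h2⟩
      · right; rw [h2]; exact (mem_PN.1 hp).1
      · left; rw [h1]; exact (mem_PN.1 hp).1
    rcases hpend with h | h
    · exact (key 2 (by omega) hmem).1 (by omega) h
    · exact (key 2 (by omega) hmem).2 (by omega) h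
  rcases hmlen with h2 | h4
  · -- c = [i, j]
    obtain ⟨a, b, rfl⟩ := List.length_eq_two.1 h2
    have ha : a = i := by simpa using hhead
    have hb : b = j := by simpa using hlast
    subst ha; subst hb
    left
    have hlt : 0 < (chainEdges [a, b]).length := by rw [chainEdges_length]; simp
    have hmem : (chainEdges [a, b]).get ⟨0, hlt⟩ ∈ M := (halt.2 0 hlt).2 (by decide)
    rw [chainEdges_get] at hmem
    exact ⟨rfl, hmem⟩
  · -- c = [i, u, w, j]
    obtain ⟨a, u, w, b, rfl⟩ : ∃ a u w b, c = [a, u, w, b] := by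
      rcases c with _ | ⟨a, _ | ⟨u, _ | ⟨w, _ | ⟨b, _ | ⟨e, t⟩⟩⟩⟩⟩ <;>
        first
          | (exact ⟨_, _, _, _, rfl⟩)
          | (exfalso; simp at h4)
          | (exfalso; simp at h4; omega)
    have ha : a = i := by simpa using hhead
    have hb : b = j := by simpa using hlast
    subst ha; subst hb
    right
    have hce : chainEdges [a, u, w, b] = [s(a, u), s(u, w), s(w, b)] := rfl
    have hlt0 : 0 < (chainEdges [a, u, w, b]).length := by rw [hce]; simp
    have hlt1 : 1 < (chainEdges [a, u, w, b]).length := by rw [hce]; simp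
    have hlt2 : 2 < (chainEdges [a, u, w, b]).length := by rw [hce]; simp
    have hm0 : s(a, u) ∈ M := by
      have h := (halt.2 0 hlt0).2 (by decide)
      simpa [hce] using h
    have hm2 : s(w, b) ∈ M := by
      have h := (halt.2 2 hlt2).2 (by decide)
      simpa [hce] using h
    have hm1 : s(u, w) ∉ M := by
      intro hmem
      have h := (halt.2 1 hlt1).1 (by simpa [hce] using hmem)
      simp at h
    obtain ⟨u', p', heq, hu', hp'⟩ := max_edge_struct hD hnp hM hm0
    rw [Sym2.eq_iff] at heq
    obtain ⟨hadj01, hadj12, hadj23, -⟩ :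
        Adjd (DA A) a u ∧ Adjd (DA A) u w ∧ Adjd (DA A) w b ∧ True := by
      simp only [List.Chain', List.isChain_cons_cons, List.isChain_singleton] at hch
      exact ⟨hch.1, hch.2.1, hch.2.2.1, trivial⟩
    have hanodup : a ≠ u ∧ a ≠ w ∧ a ≠ b ∧ u ≠ w ∧ u ≠ b ∧ w ≠ b := by
      simp only [List.nodup_cons, List.mem_cons, List.mem_singleton,
        List.not_mem_nil] at hnd
      push_neg at hnd
      tauto
    have hpa : Pendant (DA A) a ∧ ¬ Pendant (DA A) u := by
      rcases heq with ⟨h1, h2⟩ | ⟨h1, h2⟩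
      · -- a = u', u = p' pendant: contradiction since u adjacent to a and w
        exfalso
        have hupend : Pendant (DA A) u := by rw [h2]; exact (mem_PN.1 hp').1
        have e1 := pnbr_uniq hupend (Adjd_symm hadj01)
        have e2 := pnbr_uniq hupend hadj12
        exact hanodup.2.1 (by rw [e1, ← e2])
      · exact ⟨by rw [h1]; exact (mem_PN.1 hp').1, by rw [h2]; exact hu'⟩
    obtain ⟨u2', p2', heq2, hu2', hp2'⟩ := max_edge_struct hD hnp hM hm2
    rw [Sym2.eq_iff] at heq2
    have hpb : Pendant (DA A) b ∧ ¬ Pendant (DA A) w := by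
      rcases heq2 with ⟨h1, h2⟩ | ⟨h1, h2⟩
      · exact ⟨by rw [h2]; exact (mem_PN.1 hp2').1, by rw [h1]; exact hu2'⟩
      · exfalso
        have hwpend : Pendant (DA A) w := by rw [h1]; exact (mem_PN.1 hp2').1
        have e1 := pnbr_uniq hwpend (Adjd_symm hadj12)
        have e2 := pnbr_uniq hwpend hadj23
        refine hanodup.2.2.2.2.1 ?_
        have : u = b := by rw [e1, ← e2]
        exact this
    refine ⟨u, w, rfl, hm0, hm2, hm1, hpa.1, hpb.1, hpa.2, hpb.2,
      (pnbr_uniq hpa.1 hadj01).symm, (pnbr_uniq hpb.1 (Adjd_symm hadj23)).symm,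
      hadj12, hanodup.2.2.2.1, hanodup.2.2.1⟩

end ABAproof
namespace ABAproof
open Finset
open scoped Classical

variable {n : ℕ} {A : Matrix (Fin n) (Fin n) ℝ}

lemma isCycleChainBtw_pair {x y : Fin n} (hadj : Adjd (DA A) x y) :
    IsCycleChainBtw (DA A) x y [x, y] := by
  refine ⟨⟨?_, by simp, ?_⟩, rfl, rfl⟩
  · simp [hadj.1]
  · simp [List.Chain', List.isChain_cons_cons, hadj]

lemma isAltChain_pair {x y : Fin n} {M : Finset (Sym2 (Fin n))} (h : s(x, y) ∈ M) :
    IsAltChain M [x, y] := by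
  constructor
  · rw [chainEdges_length]; simp
  · intro k hk
    have hk1 : k < 1 := by rw [chainEdges_length] at hk; simpa using hk
    have hk0 : k = 0 := by omega
    subst hk0
    show s(x, y) ∈ M ↔ Even 0
    simp [h]

lemma MMset_eq_of_nonpendant (hD : InClassD (DA A)) (hnp : ∀ p q, Pendant (DA A) p →
    Pendant (DA A) q → ¬ Adjd (DA A) p q) {x y : Fin n}
    (h : ¬ Pendant (DA A) x ∨ ¬ Pendant (DA A) y) (hadj : Adjd (DA A) x y) :
    MMset A x y = {M | IsMaxMatching (DA A) M ∧ s(x, y) ∈ M} := by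
  ext M
  constructor
  · rintro ⟨hMmax, c, hc, halt⟩
    rcases chain_classify hD hnp hMmax hc halt with ⟨-, hmem⟩ |
      ⟨u, w, -, -, -, -, hpx, hpy, -⟩
    · exact ⟨hMmax, hmem⟩
    · rcases h with h | h
      · exact absurd hpx h
      · exact absurd hpy h
  · rintro ⟨hMmax, hmem⟩
    exact ⟨hMmax, [x, y], isCycleChainBtw_pair hadj, isAltChain_pair hmem⟩

lemma theChain_eq_of_nonpendant (hD : InClassD (DA A)) (hnp : ∀ p q, Pendant (DA A) p →
    Pendant (DA A) q → ¬ Adjd (DA A) p q) {x y : Fin n}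
    (h : ¬ Pendant (DA A) x ∨ ¬ Pendant (DA A) y) (hadj : Adjd (DA A) x y)
    (hmm : MaxMatchable A x y) : theChain A x y = [x, y] := by
  obtain ⟨M, hM⟩ := hmm
  obtain ⟨hMmax, c, hc, halt⟩ := hM
  have hcond : ∃ c, IsCycleChainBtw (DA A) x y c ∧ ∃ M ∈ MMset A x y, IsAltChain M c :=
    ⟨c, hc, M, ⟨hMmax, c, hc, halt⟩, halt⟩
  rw [theChain, dif_pos hcond]
  obtain ⟨hc₀, M₀, hM₀, halt₀⟩ := hcond.choose_spec
  have hM₀max : IsMaxMatching (DA A) M₀ := hM₀.1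
  rcases chain_classify hD hnp hM₀max hc₀ halt₀ with ⟨heq, -⟩ |
    ⟨u, w, -, -, -, -, hpx, hpy, -⟩
  · exact heq
  · rcases h with h' | h'
    · exact absurd hpx h'
    · exact absurd hpy h'

lemma MMset_eq_pendant_pair (hD : InClassD (DA A)) (hnp : ∀ p q, Pendant (DA A) p →
    Pendant (DA A) q → ¬ Adjd (DA A) p q) {p q : Fin n}
    (hp : Pendant (DA A) p) (hq : Pendant (DA A) q)
    (hne : pnbr A p ≠ pnbr A q) (hadj : Adjd (DA A) (pnbr A p) (pnbr A q)) :
    MMset A p q = {M | IsMaxMatching (DA A) M ∧ s(p, pnbr A p) ∈ M ∧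
      s(pnbr A q, q) ∈ M} := by
  have hpu : ¬ Pendant (DA A) (pnbr A p) := fun h => hnp p _ hp h (pnbr_adj hp)
  have hqw : ¬ Pendant (DA A) (pnbr A q) := fun h => hnp q _ hq h (pnbr_adj hq)
  ext M
  constructor
  · rintro ⟨hMmax, c, hc, halt⟩
    rcases chain_classify hD hnp hMmax hc halt with ⟨-, hmem⟩ |
      ⟨u, w, -, hm0, hm2, -, -, -, -, -, hpu', hpw', -⟩
    · exfalso
      obtain ⟨u', p', heq, hu', hp'⟩ := max_edge_struct hD hnp hMmax hmem
      rw [Sym2.eq_iff] at heq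
      rcases heq with ⟨h1, -⟩ | ⟨-, h2⟩
      · exact hu' (h1 ▸ hp)
      · exact hu' (h2 ▸ hq)
    · exact ⟨hMmax, hpu' ▸ hm0, hpw' ▸ hm2⟩
  · rintro ⟨hMmax, hmem1, hmem2⟩
    set u := pnbr A p with hu
    set w := pnbr A q with hw
    have hpq : p ≠ q := fun h => hne (by rw [hu, hw, h])
    have hpw : p ≠ w := fun h => hqw (h ▸ hp)
    have hqu : q ≠ u := fun h => hpu (h ▸ hq)
    have hpu2 : p ≠ u := Ne.symm (pnbr_ne hp)
    have hqw2 : q ≠ w := Ne.symm (pnbr_ne hq)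
    have hchain : IsCycleChainBtw (DA A) p q [p, u, w, q] := by
      refine ⟨⟨?_, by simp, ?_⟩, rfl, ?_⟩
      · simp [hpu2, hpw, hpq, hne, Ne.symm hqu, Ne.symm hqw2]
      · simp only [List.Chain', List.isChain_cons_cons, List.isChain_singleton, and_true]
        exact ⟨pnbr_adj hp, hadj, Adjd_symm (pnbr_adj hq)⟩
      · rfl
    have halt : IsAltChain M [p, u, w, q] := by
      have hce : chainEdges [p, u, w, q] = [s(p, u), s(u, w), s(w, q)] := rfl
      constructor
      · show Odd 3
        exact ⟨1, rfl⟩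
      · intro k hk
        have hk3 : k < 3 := by rw [chainEdges_length] at hk; simpa using hk
        interval_cases k
        · show s(p, u) ∈ M ↔ Even 0
          simp [hmem1]
        · show s(u, w) ∈ M ↔ Even 1
          constructor
          · intro hmemuw
            exfalso
            have hne2 : s(p, u) ≠ s(u, w) := by
              simp [Sym2.eq_iff, hpu2, hpw, hne]
            exact hMmax.1.2 _ hmem1 _ hmemuw hne2 u (by simp) (by simp)
          · intro h
            exact absurd h (by decide)
        · show s(w, q) ∈ M ↔ Even 2
          exact ⟨fun _ => by decide, fun _ => hmem2⟩
    exact ⟨hMmax, [p, u, w, q], hchain, halt⟩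

lemma theChain_eq_pendant_pair (hD : InClassD (DA A)) (hnp : ∀ p q, Pendant (DA A) p →
    Pendant (DA A) q → ¬ Adjd (DA A) p q) {p q : Fin n}
    (hp : Pendant (DA A) p) (hq : Pendant (DA A) q)
    (hne : pnbr A p ≠ pnbr A q) (hadj : Adjd (DA A) (pnbr A p) (pnbr A q))
    (hmm : MaxMatchable A p q) :
    theChain A p q = [p, pnbr A p, pnbr A q, q] := by
  obtain ⟨M, hM⟩ := hmm
  obtain ⟨hMmax, c, hc, halt⟩ := hM
  have hcond : ∃ c, IsCycleChainBtw (DA A) p q c ∧ ∃ M ∈ MMset A p q, IsAltChain M c :=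
    ⟨c, hc, M, ⟨hMmax, c, hc, halt⟩, halt⟩
  rw [theChain, dif_pos hcond]
  obtain ⟨hc₀, M₀, hM₀, halt₀⟩ := hcond.choose_spec
  have hM₀max : IsMaxMatching (DA A) M₀ := hM₀.1
  rcases chain_classify hD hnp hM₀max hc₀ halt₀ with ⟨-, hmem⟩ |
    ⟨u, w, heq, -, -, -, -, -, -, -, hpu', hpw', -⟩
  · exfalso
    obtain ⟨u', p', heq, hu', hp'⟩ := max_edge_struct hD hnp hM₀max hmem
    rw [Sym2.eq_iff] at heq
    rcases heq with ⟨h1, -⟩ | ⟨-, h2⟩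
    · exact hu' (h1 ▸ hp)
    · exact hu' (h2 ▸ hq)
  · rw [heq, hpu', hpw']

end ABAproof
namespace ABAproof
open Finset
open scoped Classical

variable {n : ℕ} {A : Matrix (Fin n) (Fin n) ℝ}

lemma goodf_update {f : Fin n → Fin n} (hgf : goodf A f) {u p : Fin n}
    (hu : u ∈ Nf A) (hp : p ∈ PN A u) : goodf A (Function.update f u p) := by
  constructor
  · intro v hv
    rcases eq_or_ne v u with rfl | hne
    · rwa [Function.update_self]
    · rw [Function.update_of_ne hne]; exact hgf.1 v hv
  · intro v hv
    have hvu : v ≠ u := fun h => hv (h ▸ hu)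
    rw [Function.update_of_ne hvu]; exact hgf.2 v hv

lemma exists_max_with_edge (hD : InClassD (DA A)) (hnp : ∀ p q, Pendant (DA A) p →
    Pendant (DA A) q → ¬ Adjd (DA A) p q) {u p : Fin n} (hu : u ∈ Nf A)
    (hp : p ∈ PN A u) : ∃ M, IsMaxMatching (DA A) M ∧ s(u, p) ∈ M := by
  obtain ⟨f, hgf⟩ := exists_goodf hD
  refine ⟨mOf A (Function.update f u p), isMax_mOf hnp (goodf_update hgf hu hp), ?_⟩
  refine mem_mOf.2 ⟨u, hu, ?_⟩
  rw [Function.update_self]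

lemma exists_max_with_two_edges (hD : InClassD (DA A)) (hnp : ∀ p q, Pendant (DA A) p →
    Pendant (DA A) q → ¬ Adjd (DA A) p q) {u w p q : Fin n} (hu : u ∈ Nf A)
    (hw : w ∈ Nf A) (huw : u ≠ w) (hp : p ∈ PN A u) (hq : q ∈ PN A w) :
    ∃ M, IsMaxMatching (DA A) M ∧ s(u, p) ∈ M ∧ s(w, q) ∈ M := by
  obtain ⟨f, hgf⟩ := exists_goodf hD
  refine ⟨mOf A (Function.update (Function.update f w q) u p),
    isMax_mOf hnp (goodf_update (goodf_update hgf hw hq) hu hp), ?_, ?_⟩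
  · refine mem_mOf.2 ⟨u, hu, ?_⟩
    rw [Function.update_self]
  · refine mem_mOf.2 ⟨w, hw, ?_⟩
    rw [Function.update_of_ne huw.symm, Function.update_self]

lemma filter_mOf_single {f : Fin n → Fin n} (hgf : goodf A f) {u p : Fin n}
    (hu : u ∈ Nf A) (hp : p ∈ PN A u) (hfu : f u = p) :
    (mOf A f).filter (fun e => e ≠ s(u, p))
      = (Nf A \ {u}).image (fun v => s(v, f v)) := by
  ext e
  simp only [mem_filter, mem_mOf, mem_image, mem_sdiff, mem_singleton]
  constructor
  · rintro ⟨⟨v, hv, rfl⟩, hne⟩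
    refine ⟨v, ⟨hv, fun h => hne (by rw [h, hfu])⟩, rfl⟩
  · rintro ⟨v, ⟨hv, hvu⟩, rfl⟩
    refine ⟨⟨v, hv, rfl⟩, fun h => ?_⟩
    rw [Sym2.eq_iff] at h
    rcases h with ⟨h1, -⟩ | ⟨h1, -⟩
    · exact hvu h1
    · exact (mem_Nf.1 hv) (h1 ▸ (mem_PN.1 hp).1)

lemma prod_image_sub {f : Fin n → Fin n} (hgf : goodf A f) {K : Finset (Fin n)} :
    ∏ e ∈ (Nf A \ K).image (fun v => s(v, f v)), cycProd A e
      = ∏ v ∈ Nf A \ K, (A v (f v) * A (f v) v) := by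
  rw [prod_image]
  · exact prod_congr rfl fun v _ => cycProd_mk A v (f v)
  · intro x hx y hy h
    exact goodf_injOn hgf (mem_sdiff.1 hx).1 (mem_sdiff.1 hy).1 h

lemma MMset_toFinset_single (hD : InClassD (DA A)) (hnp : ∀ p q, Pendant (DA A) p →
    Pendant (DA A) q → ¬ Adjd (DA A) p q) {x y u p : Fin n}
    (hMM : MMset A x y = {M | IsMaxMatching (DA A) M ∧ s(u, p) ∈ M}) :
    (MMset A x y).toFinite.toFinset
      = (maxMatchings A).filter (fun M => ∀ v ∈ ({u} : Finset (Fin n)), s(v, p) ∈ M) := by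
  ext M
  rw [Set.Finite.mem_toFinset, hMM, mem_filter, mem_maxMatchings]
  simp [Set.mem_setOf_eq]

/-- μ_{up} for a non-pendant `u` and adjacent pendant `p`. -/
lemma mu_up (hD : InClassD (DA A)) (hnp : ∀ p q, Pendant (DA A) p →
    Pendant (DA A) q → ¬ Adjd (DA A) p q) {u p : Fin n} (hu : u ∈ Nf A)
    (hp : p ∈ PN A u) : mu A u p = A u p * ∏ v ∈ Nf A \ {u}, Sv A v := by
  have hadj : Adjd (DA A) u p := (mem_PN.1 hp).2
  have hMM := MMset_eq_of_nonpendant hD hnp (Or.inl (mem_Nf.1 hu)) hadj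
  obtain ⟨M₀, hM₀max, hM₀mem⟩ := exists_max_with_edge hD hnp hu hp
  have hmm : MaxMatchable A u p := ⟨M₀, by rw [hMM]; exact ⟨hM₀max, hM₀mem⟩⟩
  have hthe : theChain A u p = [u, p] :=
    theChain_eq_of_nonpendant hD hnp (Or.inl (mem_Nf.1 hu)) hadj hmm
  have hbeta : beta A u p = A u p := by
    rw [beta, if_pos hmm, hthe]
    simp [pathProd]
  rw [mu, hbeta]
  congr 1
  rw [MMset_toFinset_single hD hnp hMM]
  refine sum_pinned hD hnp {u} (by simpa using hu) (fun _ => p)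
    (by intro v hv; rw [mem_singleton] at hv; subst hv; exact hp) _ ?_
  intro f hgf hpins
  have hfu : f u = p := hpins u (mem_singleton_self u)
  rw [betaBar, hthe]
  have hpred : ∀ e, (e ∉ chainEdges [u, p]) = (e ≠ s(u, p)) := by
    intro e
    simp [chainEdges]
  simp only [hpred]
  rw [filter_mOf_single hgf hu hp hfu, prod_image_sub hgf]

/-- μ_{pu} for a non-pendant `u` and adjacent pendant `p`. -/
lemma mu_pu (hD : InClassD (DA A)) (hnp : ∀ p q, Pendant (DA A) p →
    Pendant (DA A) q → ¬ Adjd (DA A) p q) {u p : Fin n} (hu : u ∈ Nf A)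
    (hp : p ∈ PN A u) : mu A p u = A p u * ∏ v ∈ Nf A \ {u}, Sv A v := by
  have hadj : Adjd (DA A) p u := Adjd_symm (mem_PN.1 hp).2
  have hMM := MMset_eq_of_nonpendant hD hnp (Or.inr (mem_Nf.1 hu)) hadj
  have hMM' : MMset A p u = {M | IsMaxMatching (DA A) M ∧ s(u, p) ∈ M} := by
    rw [hMM, Sym2.eq_swap]
  obtain ⟨M₀, hM₀max, hM₀mem⟩ := exists_max_with_edge hD hnp hu hp
  have hmm : MaxMatchable A p u := ⟨M₀, by rw [hMM']; exact ⟨hM₀max, hM₀mem⟩⟩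
  have hthe : theChain A p u = [p, u] :=
    theChain_eq_of_nonpendant hD hnp (Or.inr (mem_Nf.1 hu)) hadj hmm
  have hbeta : beta A p u = A p u := by
    rw [beta, if_pos hmm, hthe]
    simp [pathProd]
  rw [mu, hbeta]
  congr 1
  rw [MMset_toFinset_single hD hnp hMM']
  refine sum_pinned hD hnp {u} (by simpa using hu) (fun _ => p)
    (by intro v hv; rw [mem_singleton] at hv; subst hv; exact hp) _ ?_
  intro f hgf hpins
  have hfu : f u = p := hpins u (mem_singleton_self u)
  rw [betaBar, hthe]
  have hpred : ∀ e, (e ∉ chainEdges [p, u]) = (e ≠ s(u, p)) := by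
    intro e
    simp only [chainEdges, List.tail_cons, List.zipWith_cons_cons, List.zipWith_nil_right,
      List.mem_singleton]
    rw [Sym2.eq_swap]
  simp only [hpred]
  rw [filter_mOf_single hgf hu hp hfu, prod_image_sub hgf]

end ABAproof
namespace ABAproof
open Finset
open scoped Classical

variable {n : ℕ} {A : Matrix (Fin n) (Fin n) ℝ}

lemma filter_mOf_double {f : Fin n → Fin n} (hgf : goodf A f) {u w p q : Fin n}
    (hu : u ∈ Nf A) (hw : w ∈ Nf A) (huw : u ≠ w) (hp : p ∈ PN A u) (hq : q ∈ PN A w)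
    (hfu : f u = p) (hfw : f w = q) :
    (mOf A f).filter (fun e => e ∉ chainEdges [p, u, w, q])
      = (Nf A \ {u, w}).image (fun v => s(v, f v)) := by
  have hce : chainEdges [p, u, w, q] = [s(p, u), s(u, w), s(w, q)] := rfl
  ext e
  simp only [hce, mem_filter, mem_mOf, mem_image, mem_sdiff, mem_insert, mem_singleton,
    List.mem_cons, List.not_mem_nil, or_false]
  constructor
  · rintro ⟨⟨v, hv, rfl⟩, hne3⟩
    push_neg at hne3
    refine ⟨v, ⟨hv, ?_⟩, rfl⟩
    push_neg
    constructor
    · rintro rfl; exact hne3.1 (by rw [hfu, Sym2.eq_swap])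
    · rintro rfl; exact hne3.2.2 (by rw [hfw])
  · rintro ⟨v, ⟨hv, hv2⟩, rfl⟩
    push_neg at hv2
    refine ⟨⟨v, hv, rfl⟩, ?_⟩
    push_neg
    refine ⟨fun h => ?_, fun h => ?_, fun h => ?_⟩
    · rw [Sym2.eq_iff] at h
      rcases h with ⟨h1, -⟩ | ⟨h1, -⟩
      · exact (mem_Nf.1 hv) (h1 ▸ (mem_PN.1 hp).1)
      · exact hv2.1 h1
    · rw [Sym2.eq_iff] at h
      rcases h with ⟨h1, -⟩ | ⟨h1, -⟩
      · exact hv2.1 h1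
      · exact hv2.2 h1
    · rw [Sym2.eq_iff] at h
      rcases h with ⟨h1, -⟩ | ⟨h1, -⟩
      · exact hv2.2 h1
      · exact (mem_Nf.1 hv) (h1 ▸ (mem_PN.1 hq).1)

/-- μ_{pq} for pendants `p ≠ q` with distinct adjacent neighbours. -/
lemma mu_pq (hD : InClassD (DA A)) (hnp : ∀ p q, Pendant (DA A) p →
    Pendant (DA A) q → ¬ Adjd (DA A) p q) {p q : Fin n} (hp : Pendant (DA A) p)
    (hq : Pendant (DA A) q) (hne : pnbr A p ≠ pnbr A q)
    (hadj : Adjd (DA A) (pnbr A p) (pnbr A q)) :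
    mu A p q = -(A p (pnbr A p) * A (pnbr A p) (pnbr A q) * A (pnbr A q) q)
      * ∏ v ∈ Nf A \ {pnbr A p, pnbr A q}, Sv A v := by
  set u := pnbr A p with hudef
  set w := pnbr A q with hwdef
  have hu : u ∈ Nf A := mem_Nf.2 (fun h => hnp p u hp h (pnbr_adj hp))
  have hw : w ∈ Nf A := mem_Nf.2 (fun h => hnp q w hq h (pnbr_adj hq))
  have hpPN : p ∈ PN A u := (mem_PN_iff hD.1 hp).2 hudef.symm
  have hqPN : q ∈ PN A w := (mem_PN_iff hD.1 hq).2 hwdef.symm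
  have hMM := MMset_eq_pendant_pair hD hnp hp hq hne hadj
  obtain ⟨M₀, hM₀max, hm1, hm2⟩ := exists_max_with_two_edges hD hnp hu hw hne hpPN hqPN
  have hmm : MaxMatchable A p q := by
    refine ⟨M₀, ?_⟩
    rw [hMM]
    exact ⟨hM₀max, by rwa [Sym2.eq_swap] at hm1, hm2⟩
  have hthe : theChain A p q = [p, u, w, q] :=
    theChain_eq_pendant_pair hD hnp hp hq hne hadj hmm
  have hbeta : beta A p q = -(A p u * A u w * A w q) := by
    rw [beta, if_pos hmm, hthe]
    simp [pathProd]
    ring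
  rw [mu, hbeta]
  congr 1
  have hset : (MMset A p q).toFinite.toFinset = (maxMatchings A).filter
      (fun M => ∀ v ∈ ({u, w} : Finset (Fin n)), s(v, if v = u then p else q) ∈ M) := by
    ext M
    rw [Set.Finite.mem_toFinset, hMM, mem_filter, mem_maxMatchings]
    simp only [Set.mem_setOf_eq, mem_insert, mem_singleton, forall_eq_or_imp, forall_eq,
      if_pos rfl, if_neg (Ne.symm hne)]
    constructor
    · rintro ⟨h1, h2, h3⟩
      exact ⟨h1, by rwa [Sym2.eq_swap] at h2, h3⟩
    · rintro ⟨h1, h2, h3⟩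
      exact ⟨h1, by rwa [Sym2.eq_swap], h3⟩
  rw [hset]
  refine sum_pinned hD hnp {u, w} ?_ (fun v => if v = u then p else q) ?_ _ ?_
  · intro v hv
    rw [mem_insert, mem_singleton] at hv
    rcases hv with rfl | rfl
    · exact hu
    · exact hw
  · intro v hv
    rw [mem_insert, mem_singleton] at hv
    rcases hv with rfl | rfl
    · simpa using hpPN
    · simpa [Ne.symm hne] using hqPN
  · intro f hgf hpins
    have hfu : f u = p := by
      have h := hpins u (mem_insert_self u {w})
      simpa using h
    have hfw : f w = q := by
      have h := hpins w (mem_insert_of_mem (mem_singleton_self w))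
      simpa [Ne.symm hne] using h
    rw [betaBar, hthe]
    rw [filter_mOf_double hgf hu hw hne hpPN hqPN hfu hfw, prod_image_sub hgf]

lemma mu_zero_nonpendant (hD : InClassD (DA A)) (hnp : ∀ p q, Pendant (DA A) p →
    Pendant (DA A) q → ¬ Adjd (DA A) p q) {j k : Fin n} (hj : j ∈ Nf A)
    (hk : k ∉ PN A j) : mu A j k = 0 := by
  suffices h : ¬ MaxMatchable A j k by rw [mu, beta, if_neg h, zero_mul]
  rintro ⟨M, hMmax, c, hc, halt⟩
  rcases chain_classify hD hnp hMmax hc halt with ⟨-, hmem⟩ |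
    ⟨u, w, -, -, -, -, hpj, -⟩
  · obtain ⟨u', p', heq, hu', hp'⟩ := max_edge_struct hD hnp hMmax hmem
    rw [Sym2.eq_iff] at heq
    rcases heq with ⟨h1, h2⟩ | ⟨h1, h2⟩
    · refine hk ?_
      rw [h2, h1]
      exact hp'
    · exact (mem_Nf.1 hj) (h1 ▸ (mem_PN.1 hp').1)
  · exact (mem_Nf.1 hj) hpj

lemma mu_zero_pendant (hD : InClassD (DA A)) (hnp : ∀ p q, Pendant (DA A) p →
    Pendant (DA A) q → ¬ Adjd (DA A) p q) {j k : Fin n} (hj : Pendant (DA A) j)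
    (hk1 : k ≠ pnbr A j)
    (hk2 : ¬ (Pendant (DA A) k ∧ pnbr A j ≠ pnbr A k ∧
      Adjd (DA A) (pnbr A j) (pnbr A k))) : mu A j k = 0 := by
  suffices h : ¬ MaxMatchable A j k by rw [mu, beta, if_neg h, zero_mul]
  rintro ⟨M, hMmax, c, hc, halt⟩
  rcases chain_classify hD hnp hMmax hc halt with ⟨-, hmem⟩ |
    ⟨u, w, -, -, -, -, -, hpk, -, -, hpnj, hpnk, hadjuw, huw, -⟩
  · obtain ⟨u', p', heq, hu', hp'⟩ := max_edge_struct hD hnp hMmax hmem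
    rw [Sym2.eq_iff] at heq
    rcases heq with ⟨h1, -⟩ | ⟨h1, h2⟩
    · exact hu' (h1 ▸ hj)
    · refine hk1 ?_
      have := (mem_PN_iff hD.1 (h1 ▸ hj : Pendant (DA A) p')).1 hp'
      rw [h2, ← this, h1]
  · exact hk2 ⟨hpk, by rw [hpnj, hpnk]; exact huw, by rw [hpnj, hpnk]; exact hadjuw⟩

end ABAproof
namespace ABAproof
open Finset
open scoped Classical

variable {n : ℕ} {A : Matrix (Fin n) (Fin n) ℝ}

lemma E_decomp (hD : InClassD (DA A)) (hnp : ∀ p q, Pendant (DA A) p →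
    Pendant (DA A) q → ¬ Adjd (DA A) p q) (i l j k : Fin n) :
    A i j * mu A j k * A k l
      = (if j = l ∧ l ∈ Nf A ∧ k ∈ PN A l then
          A i l * (A l k * A k l) * ∏ v ∈ Nf A \ {l}, Sv A v else 0)
      + (if k = i ∧ i ∈ Nf A ∧ j ∈ PN A i then
          (A i j * A j i) * A i l * ∏ v ∈ Nf A \ {i}, Sv A v else 0)
      + (if i ∈ Nf A ∧ l ∈ Nf A ∧ i ≠ l ∧ j ∈ PN A i ∧ k ∈ PN A l then
          -((A i j * A j i) * A i l * (A l k * A k l) * ∏ v ∈ Nf A \ {i, l}, Sv A v)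
         else 0) := by
  set V1 : ℝ := A i l * (A l k * A k l) * ∏ v ∈ Nf A \ {l}, Sv A v with hV1
  set V2 : ℝ := (A i j * A j i) * A i l * ∏ v ∈ Nf A \ {i}, Sv A v with hV2
  set V3 : ℝ := -((A i j * A j i) * A i l * (A l k * A k l) *
    ∏ v ∈ Nf A \ {i, l}, Sv A v) with hV3
  by_cases hjN : j ∈ Nf A
  · -- j non-pendant: only the first term can be active
    have h2z : (if k = i ∧ i ∈ Nf A ∧ j ∈ PN A i then V2 else 0) = 0 :=
      if_neg (by rintro ⟨-, -, h3⟩; exact (mem_Nf.1 hjN) (mem_PN.1 h3).1)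
    have h3z : (if i ∈ Nf A ∧ l ∈ Nf A ∧ i ≠ l ∧ j ∈ PN A i ∧ k ∈ PN A l then V3 else 0)
        = 0 :=
      if_neg (by rintro ⟨-, -, -, h4, -⟩; exact (mem_Nf.1 hjN) (mem_PN.1 h4).1)
    rw [h2z, h3z, add_zero, add_zero]
    by_cases hkPN : k ∈ PN A j
    · rw [mu_up hD hnp hjN hkPN]
      rcases eq_or_ne j l with rfl | hlj
      · rw [if_pos ⟨rfl, hjN, hkPN⟩, hV1]
        ring
      · have hkp : Pendant (DA A) k := (mem_PN.1 hkPN).1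
        have hkj : pnbr A k = j := (mem_PN_iff hD.1 hkp).1 hkPN
        have hkl : A k l = 0 :=
          pendant_row_zero hD.1 hkp (by rw [hkj]; exact fun h => hlj h.symm)
        rw [if_neg (by rintro ⟨rfl, -, -⟩; exact hlj rfl), hkl]
        ring
    · rw [mu_zero_nonpendant hD hnp hjN hkPN,
        if_neg (by rintro ⟨rfl, -, h3⟩; exact hkPN h3)]
      ring
  · -- j pendant
    have hjp : Pendant (DA A) j := by
      by_contra h
      exact hjN (mem_Nf.2 h)
    have h1z : (if j = l ∧ l ∈ Nf A ∧ k ∈ PN A l then V1 else 0) = 0 :=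
      if_neg (by rintro ⟨rfl, h2, -⟩; exact hjN h2)
    rw [h1z, zero_add]
    have huN : pnbr A j ∈ Nf A :=
      mem_Nf.2 (fun h => hnp j _ hjp h (pnbr_adj hjp))
    have hjPN : j ∈ PN A (pnbr A j) := (mem_PN_iff hD.1 hjp).2 rfl
    by_cases hk : k = pnbr A j
    · subst hk
      rw [mu_pu hD hnp huN hjPN]
      have h3z : (if i ∈ Nf A ∧ l ∈ Nf A ∧ i ≠ l ∧ j ∈ PN A i ∧ pnbr A j ∈ PN A l
          then V3 else 0) = 0 :=
        if_neg (by rintro ⟨-, -, -, -, h5⟩; exact (mem_Nf.1 huN) (mem_PN.1 h5).1)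
      rw [h3z, add_zero]
      rcases eq_or_ne (pnbr A j) i with hiu | hiu
      · have hc : pnbr A j = i ∧ i ∈ Nf A ∧ j ∈ PN A i := by
          refine ⟨hiu, ?_, ?_⟩
          · rw [← hiu]; exact huN
          · rw [← hiu]; exact hjPN
        rw [if_pos hc, hV2, ← hiu]
        ring
      · have hij : A i j = 0 :=
          pendant_col_zero hD.1 hjp (fun h => hiu (by rw [h]))
        rw [if_neg (by rintro ⟨h1, -, -⟩; exact hiu h1), hij]
        ring
    · by_cases hk2 : Pendant (DA A) k ∧ pnbr A j ≠ pnbr A k ∧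
        Adjd (DA A) (pnbr A j) (pnbr A k)
      · obtain ⟨hkp, hnepn, hadjpn⟩ := hk2
        rw [mu_pq hD hnp hjp hkp hnepn hadjpn]
        have h2z : (if k = i ∧ i ∈ Nf A ∧ j ∈ PN A i then V2 else 0) = 0 :=
          if_neg (by rintro ⟨rfl, h2, -⟩; exact (mem_Nf.1 h2) hkp)
        rw [h2z, zero_add]
        have hwN : pnbr A k ∈ Nf A :=
          mem_Nf.2 (fun h => hnp k _ hkp h (pnbr_adj hkp))
        have hkPN : k ∈ PN A (pnbr A k) := (mem_PN_iff hD.1 hkp).2 rfl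
        rcases eq_or_ne i (pnbr A j) with hiu | hiu
        · rcases eq_or_ne l (pnbr A k) with hlw | hlw
          · have hc : i ∈ Nf A ∧ l ∈ Nf A ∧ i ≠ l ∧ j ∈ PN A i ∧ k ∈ PN A l := by
              subst hiu; subst hlw
              exact ⟨huN, hwN, hnepn, hjPN, hkPN⟩
            rw [if_pos hc, hV3]
            subst hiu; subst hlw
            ring
          · have hkl : A k l = 0 :=
              pendant_row_zero hD.1 hkp hlw
            rw [if_neg (by
              rintro ⟨-, -, -, -, h5⟩
              exact hlw (((mem_PN_iff hD.1 hkp).1 h5).symm)), hkl]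
            ring
        · have hij : A i j = 0 :=
            pendant_col_zero hD.1 hjp hiu
          rw [if_neg (by
            rintro ⟨-, -, -, h4, -⟩
            exact hiu (((mem_PN_iff hD.1 hjp).1 h4).symm)), hij]
          ring
      · rw [mu_zero_pendant hD hnp hjp hk hk2]
        have h2z : (if k = i ∧ i ∈ Nf A ∧ j ∈ PN A i then V2 else 0) = 0 :=
          if_neg (by
            rintro ⟨rfl, -, h3⟩
            exact hk ((mem_PN_iff hD.1 hjp).1 h3).symm)
        rw [h2z, zero_add]
        by_cases hcond3 : i ∈ Nf A ∧ l ∈ Nf A ∧ i ≠ l ∧ j ∈ PN A i ∧ k ∈ PN A l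
        · obtain ⟨hiN, hlN, hil, hjPNi, hkPNl⟩ := hcond3
          have hji : pnbr A j = i := (mem_PN_iff hD.1 hjp).1 hjPNi
          have hkp : Pendant (DA A) k := (mem_PN.1 hkPNl).1
          have hkl : pnbr A k = l := (mem_PN_iff hD.1 hkp).1 hkPNl
          have hnadj : ¬ Adjd (DA A) (pnbr A j) (pnbr A k) := by
            intro h
            exact hk2 ⟨hkp, by rw [hji, hkl]; exact hil, h⟩
          have hAil : A i l = 0 := by
            by_contra h
            exact hnadj (by rw [hji, hkl]; exact adj_of_ne_zero hD.1 hil h)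
          rw [if_pos ⟨hiN, hlN, hil, hjPNi, hkPNl⟩, hV3, hAil]
          ring
        · rw [if_neg hcond3]
          ring
end ABAproof
namespace ABAproof
open Finset
open scoped Classical

variable {n : ℕ} {A : Matrix (Fin n) (Fin n) ℝ}

lemma sumid_caseB (hD : InClassD (DA A)) (hnp : ∀ p q, Pendant (DA A) p →
    Pendant (DA A) q → ¬ Adjd (DA A) p q) (i l : Fin n) :
    ∑ j : Fin n, ∑ k : Fin n, A i j * mu A j k * A k l = Delta A * A i l := by
  have hDel1 : ∀ {x : Fin n}, x ∈ Nf A →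
      Sv A x * ∏ v ∈ Nf A \ {x}, Sv A v = Delta A := by
    intro x hx
    rw [Delta_eq hD hnp, ← Finset.erase_eq]
    exact Finset.mul_prod_erase _ _ hx
  have hDel2 : ∀ {x y : Fin n}, x ∈ Nf A → y ∈ Nf A → x ≠ y →
      Sv A x * (Sv A y * ∏ v ∈ Nf A \ {x, y}, Sv A v) = Delta A := by
    intro x y hx hy hxy
    have hset : Nf A \ {x, y} = ((Nf A).erase x).erase y := by
      ext v
      simp only [mem_sdiff, mem_erase, mem_insert, mem_singleton]
      tauto
    rw [Delta_eq hD hnp, hset,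
      Finset.mul_prod_erase _ _ (mem_erase.2 ⟨hxy.symm, hy⟩),
      Finset.mul_prod_erase _ _ hx]
  have hdecomp := E_decomp hD hnp i l
  calc ∑ j : Fin n, ∑ k : Fin n, A i j * mu A j k * A k l
      = (∑ j : Fin n, ∑ k : Fin n, (if j = l ∧ l ∈ Nf A ∧ k ∈ PN A l then
          A i l * (A l k * A k l) * ∏ v ∈ Nf A \ {l}, Sv A v else 0))
        + ((∑ j : Fin n, ∑ k : Fin n, (if k = i ∧ i ∈ Nf A ∧ j ∈ PN A i then
          (A i j * A j i) * A i l * ∏ v ∈ Nf A \ {i}, Sv A v else 0))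
        + (∑ j : Fin n, ∑ k : Fin n,
            (if i ∈ Nf A ∧ l ∈ Nf A ∧ i ≠ l ∧ j ∈ PN A i ∧ k ∈ PN A l then
          -((A i j * A j i) * A i l * (A l k * A k l) * ∏ v ∈ Nf A \ {i, l}, Sv A v)
           else 0))) := by
        rw [← Finset.sum_add_distrib, ← Finset.sum_add_distrib]
        apply sum_congr rfl; intro j _
        rw [← Finset.sum_add_distrib, ← Finset.sum_add_distrib]
        apply sum_congr rfl; intro k _
        rw [hdecomp j k, add_assoc]
    _ = Delta A * A i l := by
        have hS1 : (∑ j : Fin n, ∑ k : Fin n, (if j = l ∧ l ∈ Nf A ∧ k ∈ PN A l then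
            A i l * (A l k * A k l) * ∏ v ∈ Nf A \ {l}, Sv A v else 0))
            = if l ∈ Nf A then A i l * Delta A else 0 := by
          by_cases hlN : l ∈ Nf A
          · rw [if_pos hlN]
            have h1 : ∀ j : Fin n, (∑ k : Fin n, (if j = l ∧ l ∈ Nf A ∧ k ∈ PN A l then
                A i l * (A l k * A k l) * ∏ v ∈ Nf A \ {l}, Sv A v else 0))
                = if j = l then A i l * Sv A l * ∏ v ∈ Nf A \ {l}, Sv A v else 0 := by
              intro j
              by_cases hj : j = l
              · rw [if_pos hj]
                have h2 : ∀ k : Fin n, (if j = l ∧ l ∈ Nf A ∧ k ∈ PN A l then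
                    A i l * (A l k * A k l) * ∏ v ∈ Nf A \ {l}, Sv A v else 0)
                    = if k ∈ PN A l then
                      (A i l * ∏ v ∈ Nf A \ {l}, Sv A v) * (A l k * A k l) else 0 := by
                  intro k
                  by_cases hk : k ∈ PN A l
                  · rw [if_pos ⟨hj, hlN, hk⟩, if_pos hk]; ring
                  · rw [if_neg (by rintro ⟨-, -, h3⟩; exact hk h3), if_neg hk]
                rw [sum_congr rfl (fun k _ => h2 k), Finset.sum_ite_mem, univ_inter,
                  ← Finset.mul_sum]
                have e1 : (∑ x ∈ PN A l, A l x * A x l) = Sv A l := rfl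
                rw [e1]
                ring
              · rw [if_neg hj]
                apply Finset.sum_eq_zero
                intro k _
                rw [if_neg (by rintro ⟨h1', -, -⟩; exact hj h1')]
            rw [sum_congr rfl (fun j _ => h1 j), Finset.sum_ite_eq' univ l,
              if_pos (mem_univ l)]
            rw [mul_comm (A i l) (Delta A), ← hDel1 hlN]
            ring
          · rw [if_neg hlN]
            apply Finset.sum_eq_zero; intro j _
            apply Finset.sum_eq_zero; intro k _
            rw [if_neg (by rintro ⟨-, h2, -⟩; exact hlN h2)]
        have hS2 : (∑ j : Fin n, ∑ k : Fin n, (if k = i ∧ i ∈ Nf A ∧ j ∈ PN A i then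
            (A i j * A j i) * A i l * ∏ v ∈ Nf A \ {i}, Sv A v else 0))
            = if i ∈ Nf A then A i l * Delta A else 0 := by
          by_cases hiN : i ∈ Nf A
          · rw [if_pos hiN]
            have h1 : ∀ j : Fin n, (∑ k : Fin n, (if k = i ∧ i ∈ Nf A ∧ j ∈ PN A i then
                (A i j * A j i) * A i l * ∏ v ∈ Nf A \ {i}, Sv A v else 0))
                = if j ∈ PN A i then
                  (A i l * ∏ v ∈ Nf A \ {i}, Sv A v) * (A i j * A j i) else 0 := by
              intro j
              by_cases hj : j ∈ PN A i
              · have h2 : ∀ k : Fin n, (if k = i ∧ i ∈ Nf A ∧ j ∈ PN A i then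
                    (A i j * A j i) * A i l * ∏ v ∈ Nf A \ {i}, Sv A v else 0)
                    = if k = i then
                      (A i l * ∏ v ∈ Nf A \ {i}, Sv A v) * (A i j * A j i) else 0 := by
                  intro k
                  by_cases hk : k = i
                  · rw [if_pos ⟨hk, hiN, hj⟩, if_pos hk]; ring
                  · rw [if_neg (by rintro ⟨h1', -, -⟩; exact hk h1'), if_neg hk]
                rw [sum_congr rfl (fun k _ => h2 k), Finset.sum_ite_eq' univ i,
                  if_pos (mem_univ i), if_pos hj]
              · rw [if_neg hj]
                apply Finset.sum_eq_zero
                intro k _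
                rw [if_neg (by rintro ⟨-, -, h3'⟩; exact hj h3')]
            rw [sum_congr rfl (fun j _ => h1 j), Finset.sum_ite_mem, univ_inter,
              ← Finset.mul_sum]
            have e2 : (∑ x ∈ PN A i, A i x * A x i) = Sv A i := rfl
            rw [e2, mul_comm (A i l) (Delta A), ← hDel1 hiN]
            ring
          · rw [if_neg hiN]
            apply Finset.sum_eq_zero; intro j _
            apply Finset.sum_eq_zero; intro k _
            rw [if_neg (by rintro ⟨-, h2, -⟩; exact hiN h2)]
        have hS3 : (∑ j : Fin n, ∑ k : Fin n,
            (if i ∈ Nf A ∧ l ∈ Nf A ∧ i ≠ l ∧ j ∈ PN A i ∧ k ∈ PN A l then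
            -((A i j * A j i) * A i l * (A l k * A k l) * ∏ v ∈ Nf A \ {i, l}, Sv A v)
             else 0))
            = if i ∈ Nf A ∧ l ∈ Nf A ∧ i ≠ l then -(A i l * Delta A) else 0 := by
          by_cases hc : i ∈ Nf A ∧ l ∈ Nf A ∧ i ≠ l
          · obtain ⟨hiN, hlN, hil⟩ := hc
            rw [if_pos ⟨hiN, hlN, hil⟩]
            have h1 : ∀ j : Fin n, (∑ k : Fin n,
                (if i ∈ Nf A ∧ l ∈ Nf A ∧ i ≠ l ∧ j ∈ PN A i ∧ k ∈ PN A l then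
                -((A i j * A j i) * A i l * (A l k * A k l) *
                  ∏ v ∈ Nf A \ {i, l}, Sv A v) else 0))
                = if j ∈ PN A i then
                  (-(A i l * ∏ v ∈ Nf A \ {i, l}, Sv A v) * Sv A l) * (A i j * A j i)
                  else 0 := by
              intro j
              by_cases hj : j ∈ PN A i
              · have h2 : ∀ k : Fin n,
                    (if i ∈ Nf A ∧ l ∈ Nf A ∧ i ≠ l ∧ j ∈ PN A i ∧ k ∈ PN A l then
                    -((A i j * A j i) * A i l * (A l k * A k l) *
                      ∏ v ∈ Nf A \ {i, l}, Sv A v) else 0)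
                    = if k ∈ PN A l then
                      ((-(A i l * ∏ v ∈ Nf A \ {i, l}, Sv A v)) * (A i j * A j i))
                        * (A l k * A k l) else 0 := by
                  intro k
                  by_cases hk : k ∈ PN A l
                  · rw [if_pos ⟨hiN, hlN, hil, hj, hk⟩, if_pos hk]; ring
                  · rw [if_neg (by rintro ⟨-, -, -, -, h5'⟩; exact hk h5'), if_neg hk]
                rw [sum_congr rfl (fun k _ => h2 k), Finset.sum_ite_mem, univ_inter,
                  ← Finset.mul_sum, if_pos hj]
                have e1 : (∑ x ∈ PN A l, A l x * A x l) = Sv A l := rfl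
                rw [e1]
                ring
              · rw [if_neg hj]
                apply Finset.sum_eq_zero
                intro k _
                rw [if_neg (by rintro ⟨-, -, -, h4', -⟩; exact hj h4')]
            rw [sum_congr rfl (fun j _ => h1 j), Finset.sum_ite_mem, univ_inter,
              ← Finset.mul_sum]
            have e1 : (∑ x ∈ PN A i, A i x * A x i) = Sv A i := rfl
            rw [e1, ← hDel2 hiN hlN hil]
            ring
          · rw [if_neg hc]
            apply Finset.sum_eq_zero; intro j _
            apply Finset.sum_eq_zero; intro k _
            rw [if_neg (by rintro ⟨h1', h2', h3', -, -⟩; exact hc ⟨h1', h2', h3'⟩)]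
        rw [hS1, hS2, hS3]
        by_cases hiN : i ∈ Nf A <;> by_cases hlN : l ∈ Nf A
        · rcases eq_or_ne i l with rfl | hil
          · rw [diag_zero hD.1]
            simp [hiN]
          · rw [if_pos hlN, if_pos hiN, if_pos ⟨hiN, hlN, hil⟩]
            ring
        · rw [if_neg hlN, if_pos hiN,
            if_neg (by rintro ⟨-, h2', -⟩; exact hlN h2')]
          ring
        · rw [if_pos hlN, if_neg hiN,
            if_neg (by rintro ⟨h1', -, -⟩; exact hiN h1')]
          ring
        · have hAil : A i l = 0 := by
            rcases eq_or_ne i l with rfl | hil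
            · exact diag_zero hD.1 i
            · by_contra h
              have hip : Pendant (DA A) i := by
                by_contra h'; exact hiN (mem_Nf.2 h')
              have hlp : Pendant (DA A) l := by
                by_contra h'; exact hlN (mem_Nf.2 h')
              exact hnp i l hip hlp (adj_of_ne_zero hD.1 hil h)
          rw [if_neg hlN, if_neg hiN,
            if_neg (by rintro ⟨h1', -, -⟩; exact hiN h1'), hAil]
          ring
end ABAproof
namespace ABAproof
open Finset
open scoped Classical

variable {n : ℕ} {A : Matrix (Fin n) (Fin n) ℝ}

lemma chain_two (huniv : ∀ v : Fin n, v = p ∨ v = q) {i' j' : Fin n} {c : List (Fin n)}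
    (hc : IsCycleChainBtw (DA A) i' j' c) : c = [i', j'] ∧ i' ≠ j' := by
  obtain ⟨⟨hnd, hlen, -⟩, hhead, hlast⟩ := hc
  have hgetinj := List.nodup_iff_injective_get.1 hnd
  have hle : c.length ≤ 2 := by
    by_contra hgt
    push_neg at hgt
    have h0 := huniv (c.get ⟨0, by omega⟩)
    have h1 := huniv (c.get ⟨1, by omega⟩)
    have h2 := huniv (c.get ⟨2, by omega⟩)
    rcases h0 with h0 | h0 <;> rcases h1 with h1 | h1 <;> rcases h2 with h2 | h2
    all_goals first
      | (have hcc := hgetinj (h0.trans h1.symm); simp at hcc)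
      | (have hcc := hgetinj (h0.trans h2.symm); simp at hcc)
      | (have hcc := hgetinj (h1.trans h2.symm); simp at hcc)
  have hlen2 : c.length = 2 := le_antisymm hle hlen
  obtain ⟨a, b, rfl⟩ := List.length_eq_two.1 hlen2
  have ha : a = i' := by simpa using hhead
  have hb : b = j' := by simpa using hlast
  subst ha; subst hb
  have hne : a ≠ b := by
    simp only [List.nodup_cons, List.mem_singleton, List.nodup_nil] at hnd
    exact hnd.1
  exact ⟨rfl, hne⟩

lemma sumid_caseA (hD : InClassD (DA A)) (hSC : StronglyConnected (DA A))
    {p q : Fin n} (hp : Pendant (DA A) p) (hq : Pendant (DA A) q)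
    (hadj : Adjd (DA A) p q) (i l : Fin n) :
    ∑ j : Fin n, ∑ k : Fin n, A i j * mu A j k * A k l = Delta A * A i l := by
  have hpq : p ≠ q := hadj.1
  -- every vertex is p or q
  have huniq_p : ∀ x, Adjd (DA A) p x → x = q := by
    intro x hx
    obtain ⟨j0, hj0, hu⟩ := hp
    rw [hu x hx, ← hu q hadj]
  have huniq_q : ∀ x, Adjd (DA A) q x → x = p := by
    intro x hx
    obtain ⟨j0, hj0, hu⟩ := hq
    rw [hu x hx, ← hu p (Adjd_symm hadj)]
  have huniv : ∀ v : Fin n, v = p ∨ v = q := by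
    intro v
    have reach : ∀ w, Relation.ReflTransGen (DA A) p w → w = p ∨ w = q := by
      intro w h
      induction h with
      | refl => left; rfl
      | tail h1 h2 ih =>
        rename_i b c
        rcases ih with rfl | rfl
        · right
          refine huniq_p c ⟨?_, h2, hD.1.2 _ _ h2⟩
          rintro rfl
          exact hD.1.1 _ h2
        · left
          refine huniq_q c ⟨?_, h2, hD.1.2 _ _ h2⟩
          rintro rfl
          exact hD.1.1 _ h2
    exact reach v (hSC p v)
  -- matchings
  set M0 : Finset (Sym2 (Fin n)) := {s(p, q)} with hM0
  have hsub : ∀ M : Finset (Sym2 (Fin n)), IsMatching (DA A) M → M ⊆ M0 := by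
    intro M hM e he
    obtain ⟨a, b, rfl, hab⟩ := hM.1 e he
    rw [hM0, mem_singleton]
    rcases huniv a with rfl | rfl <;> rcases huniv b with h | h
    · exact absurd h.symm hab.1
    · rw [h]
    · rw [h, Sym2.eq_swap]
    · exact absurd h.symm hab.1
  have hM0match : IsMatching (DA A) M0 := by
    constructor
    · intro e he
      rw [hM0, mem_singleton] at he
      exact ⟨p, q, he, hadj⟩
    · intro e he f hf hne
      rw [hM0, mem_singleton] at he hf
      exact absurd (he.trans hf.symm) hne
  have hmaxiff : ∀ M, IsMaxMatching (DA A) M ↔ M = M0 := by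
    intro M
    constructor
    · intro hM
      have h1 : M ⊆ M0 := hsub M hM.1
      have h2 : M0.card ≤ M.card := hM.2 M0 hM0match
      exact Finset.eq_of_subset_of_card_le h1 h2
    · rintro rfl
      exact ⟨hM0match, fun M' hM' => Finset.card_le_card (hsub M' hM')⟩
  have hmax : maxMatchings A = {M0} := by
    ext M
    rw [mem_maxMatchings, mem_singleton, hmaxiff]
  have hDelta : Delta A = A p q * A q p := by
    rw [Delta, hmax, Finset.sum_singleton, matchProd, hM0, Finset.prod_singleton,
      cycProd_mk]
  -- MaxMatchable characterisation
  have hno_diag : ∀ x : Fin n, ¬ MaxMatchable A x x := by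
    rintro x ⟨M, -, c, hc, -⟩
    exact (chain_two huniv hc).2 rfl
  have hmm_pq : MaxMatchable A p q :=
    ⟨M0, ⟨(hmaxiff M0).2 rfl, [p, q], isCycleChainBtw_pair hadj,
      isAltChain_pair (by rw [hM0]; exact mem_singleton_self _)⟩⟩
  have hmm_qp : MaxMatchable A q p :=
    ⟨M0, ⟨(hmaxiff M0).2 rfl, [q, p], isCycleChainBtw_pair (Adjd_symm hadj),
      isAltChain_pair (by rw [hM0, Sym2.eq_swap]; exact mem_singleton_self _)⟩⟩
  -- mu values
  have hmu : ∀ x y : Fin n, (x = p ∧ y = q) ∨ (x = q ∧ y = p) → mu A x y = A x y := by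
    rintro x y h
    have hmmxy : MaxMatchable A x y := by
      rcases h with ⟨rfl, rfl⟩ | ⟨rfl, rfl⟩
      · exact hmm_pq
      · exact hmm_qp
    have hthe : theChain A x y = [x, y] := by
      obtain ⟨M, hMmax, c, hc, halt⟩ := hmmxy
      have hcond : ∃ c, IsCycleChainBtw (DA A) x y c ∧
          ∃ M ∈ MMset A x y, IsAltChain M c :=
        ⟨c, hc, M, ⟨hMmax, c, hc, halt⟩, halt⟩
      rw [theChain, dif_pos hcond]
      exact (chain_two huniv hcond.choose_spec.1).1
    have hbeta : beta A x y = A x y := by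
      rw [beta, if_pos hmmxy, hthe]
      simp [pathProd]
    have hMMsub : (MMset A x y).toFinite.toFinset = {M0} := by
      ext M
      rw [Set.Finite.mem_toFinset, mem_singleton]
      constructor
      · rintro ⟨hMmax, -⟩
        exact (hmaxiff M).1 hMmax
      · rintro rfl
        refine ⟨(hmaxiff M0).2 rfl, [x, y], ?_, ?_⟩
        · rcases h with ⟨rfl, rfl⟩ | ⟨rfl, rfl⟩
          · exact isCycleChainBtw_pair hadj
          · exact isCycleChainBtw_pair (Adjd_symm hadj)
        · refine isAltChain_pair ?_
          rcases h with ⟨rfl, rfl⟩ | ⟨rfl, rfl⟩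
          · rw [hM0]; exact mem_singleton_self _
          · rw [hM0, Sym2.eq_swap]; exact mem_singleton_self _
    have hbb : betaBar A x y M0 = 1 := by
      rw [betaBar]
      have hfe : M0.filter (fun e => e ∉ chainEdges (theChain A x y)) = ∅ := by
        rw [hthe, hM0]
        apply Finset.filter_eq_empty_iff.2
        intro e he
        rw [mem_singleton] at he
        subst he
        simp only [not_not]
        have : chainEdges [x, y] = [s(x, y)] := rfl
        rw [this]
        rcases h with ⟨rfl, rfl⟩ | ⟨rfl, rfl⟩
        · simp
        · simp [Sym2.eq_swap]
      rw [hfe, Finset.prod_empty]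
    rw [mu, hbeta, hMMsub, Finset.sum_singleton, hbb, mul_one]
  have hmu0 : ∀ x : Fin n, mu A x x = 0 := by
    intro x
    rw [mu, beta, if_neg (hno_diag x), zero_mul]
  -- the double sum
  have huniv' : (univ : Finset (Fin n)) = {p, q} := by
    ext v
    simp only [mem_univ, true_iff, mem_insert, mem_singleton]
    exact huniv v
  have hexp : ∀ f : Fin n → ℝ, ∑ v : Fin n, f v = f p + f q := by
    intro f
    rw [huniv', Finset.sum_insert (by simpa using hpq), Finset.sum_singleton]
  rw [hexp, hexp, hexp]
  rw [hmu0 p, hmu0 q, hmu p q (Or.inl ⟨rfl, rfl⟩), hmu q p (Or.inr ⟨rfl, rfl⟩)]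
  rw [hDelta]
  rcases huniv i with rfl | rfl
  · rw [diag_zero hD.1 i]
    ring
  · rw [diag_zero hD.1 i]
    ring
end ABAproof
/-- Lemma 2.9: with `B = (μ_{ij}/Δ_A)`, one has `ABA = A`. -/
theorem ABA_eq_A {n : ℕ} (A : Matrix (Fin n) (Fin n) ℝ)
    (hD : InClassD (DA A)) (hSC : StronglyConnected (DA A)) (hΔ : Delta A ≠ 0)
    (B : Matrix (Fin n) (Fin n) ℝ) (hB : ∀ i j, B i j = mu A i j / Delta A) :
    A * B * A = A := by
  classical
  have hsum : ∀ i l : Fin n, ∑ j : Fin n, ∑ k : Fin n, A i j * mu A j k * A k l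
      = Delta A * A i l := by
    by_cases hnp : ∀ p q, Pendant (DA A) p → Pendant (DA A) q → ¬ Adjd (DA A) p q
    · exact fun i l => ABAproof.sumid_caseB hD hnp i l
    · push_neg at hnp
      obtain ⟨p, q, hp, hq, hadj⟩ := hnp
      exact fun i l => ABAproof.sumid_caseA hD hSC hp hq hadj i l
  ext i l
  simp only [Matrix.mul_apply, hB]
  have hstep : ∀ k : Fin n, (∑ j : Fin n, A i j * (mu A j k / Delta A)) * A k l
      = (∑ j : Fin n, A i j * mu A j k * A k l) / Delta A := by
    intro k
    rw [Finset.sum_div, Finset.sum_mul]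
    apply Finset.sum_congr rfl
    intro j _
    field_simp
  rw [Finset.sum_congr rfl (fun k _ => hstep k), ← Finset.sum_div, Finset.sum_comm,
    hsum i l, mul_comm, mul_div_assoc, div_self hΔ, mul_one]
end

section
/- Let A = (a_{ij}) be an n×n real matrix such that D(A) belongs to the class 𝒟, D(A) is strongly connected, and Δ_A ≠ 0. Let B = (b_{ij}) be the n×n matrix with entries b_{ij} = μ_{ij}/Δ_A. Then BAB = B. -/
open Matrix

namespace BABaux


open scoped Classical

variable {n : ℕ}

lemma adjd_symm {G : Fin n → Fin n → Prop} {i j : Fin n} (h : Adjd G i j) : Adjd G j i :=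
  ⟨h.1.symm, h.2.2, h.2.1⟩

/-- the (unique, for a pendant vertex) neighbor -/
noncomputable def pnb (G : Fin n → Fin n → Prop) (p : Fin n) : Fin n :=
  if h : ∃ j, Adjd G p j then h.choose else p

lemma pnb_adj {G : Fin n → Fin n → Prop} {p : Fin n} (hp : Pendant G p) :
    Adjd G p (pnb G p) := by
  obtain ⟨j, hj, -⟩ := hp
  rw [pnb, dif_pos ⟨j, hj⟩]
  exact (Exists.choose_spec (⟨j, hj⟩ : ∃ j, Adjd G p j))

lemma pnb_eq {G : Fin n → Fin n → Prop} {p : Fin n} (hp : Pendant G p) {j : Fin n}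
    (h : Adjd G p j) : j = pnb G p := by
  obtain ⟨k, hk, hu⟩ := hp
  rw [hu j h, hu (pnb G p) (pnb_adj ⟨k, hk, hu⟩)]

section Graph

variable {A : Matrix (Fin n) (Fin n) ℝ}

lemma A_diag (hD : InClassD (DA A)) (i : Fin n) : A i i = 0 := by
  by_contra h; exact hD.1.1 i h

lemma adj_of_ne_of_G (hD : InClassD (DA A)) {i j : Fin n} (h : DA A i j) : Adjd (DA A) i j := by
  refine ⟨?_, h, hD.1.2 i j h⟩
  rintro rfl; exact hD.1.1 i h

lemma adj_of_A_ne (hD : InClassD (DA A)) {i j : Fin n} (h : A i j ≠ 0) : Adjd (DA A) i j :=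
  adj_of_ne_of_G hD h

lemma A_eq_zero_of_not_adj (hD : InClassD (DA A)) {i j : Fin n} (h : ¬ Adjd (DA A) i j) :
    A i j = 0 := by
  by_contra h'; exact h (adj_of_A_ne hD h')

/-- two pendant vertices are never adjacent when `3 ≤ n` -/
lemma not_adj_pend_pend (hD : InClassD (DA A)) (hSC : StronglyConnected (DA A))
    (h3 : 3 ≤ n) {p q : Fin n} (hp : Pendant (DA A) p) (hq : Pendant (DA A) q) :
    ¬ Adjd (DA A) p q := by
  intro hadj
  obtain ⟨r, hrp, hrq⟩ : ∃ r : Fin n, r ≠ p ∧ r ≠ q := by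
    by_contra h
    push_neg at h
    have hsub : (Finset.univ : Finset (Fin n)) ⊆ {p, q} := by
      intro x _
      rcases eq_or_ne x p with rfl | hxp
      · simp
      · simp [h x hxp]
    have := Finset.card_le_card hsub
    simp only [Finset.card_univ, Fintype.card_fin] at this
    have h2 : ({p, q} : Finset (Fin n)).card ≤ 2 := Finset.card_insert_le _ _ |>.trans (by simp)
    omega
  have key : ∀ y, Relation.ReflTransGen (DA A) p y → (y = p ∨ y = q) := by
    intro y h
    induction h with
    | refl => exact Or.inl rfl
    | @tail b c hb hstep ih =>
      rcases ih with rfl | rfl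
      · exact Or.inr ((pnb_eq hp (adj_of_ne_of_G hD hstep)).trans (pnb_eq hp hadj).symm)
      · exact Or.inl ((pnb_eq hq (adj_of_ne_of_G hD hstep)).trans (pnb_eq hq (adjd_symm hadj)).symm)
  rcases key r (hSC p r) with h | h
  · exact hrp h
  · exact hrq h

lemma pnb_not_pendant (hD : InClassD (DA A)) (hSC : StronglyConnected (DA A))
    (h3 : 3 ≤ n) {p : Fin n} (hp : Pendant (DA A) p) : ¬ Pendant (DA A) (pnb (DA A) p) :=
  fun h => not_adj_pend_pend hD hSC h3 hp h (pnb_adj hp)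

end Graph


end BABaux

namespace BABaux


open scoped Classical

variable {n : ℕ} {A : Matrix (Fin n) (Fin n) ℝ}

lemma mem_maxMatchings {M : Finset (Sym2 (Fin n))} :
    M ∈ maxMatchings A ↔ IsMaxMatching (DA A) M := by
  simp [maxMatchings, Set.Finite.mem_toFinset]

lemma cycProd_mk (A : Matrix (Fin n) (Fin n) ℝ) (i j : Fin n) :
    cycProd A s(i, j) = A i j * A j i := rfl

lemma isEdge_mk {G : Fin n → Fin n → Prop} {x y : Fin n} :
    IsEdge G s(x, y) ↔ Adjd G x y := by
  constructor
  · rintro ⟨i, j, he, hadj⟩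
    rcases Sym2.eq_iff.mp he with ⟨rfl, rfl⟩ | ⟨rfl, rfl⟩
    · exact hadj
    · exact adjd_symm hadj
  · intro h; exact ⟨x, y, rfl, h⟩

lemma matching_eq_of_mem {G : Fin n → Fin n → Prop} {M : Finset (Sym2 (Fin n))}
    (hM : IsMatching G M) {e f : Sym2 (Fin n)} (he : e ∈ M) (hf : f ∈ M)
    {v : Fin n} (hv : v ∈ e) (hv' : v ∈ f) : e = f := by
  by_contra hne
  exact hM.2 e he f hf hne v hv hv'

lemma adj_of_mem_matching {G : Fin n → Fin n → Prop} {M : Finset (Sym2 (Fin n))}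
    (hM : IsMatching G M) {x y : Fin n} (h : s(x, y) ∈ M) : Adjd G x y :=
  isEdge_mk.mp (hM.1 _ h)

lemma isMatching_empty {G : Fin n → Fin n → Prop} : IsMatching G (∅ : Finset (Sym2 (Fin n))) :=
  ⟨fun e he => absurd he (by simp), fun e he => absurd he (by simp)⟩

lemma isMatching_subset {G : Fin n → Fin n → Prop} {M N : Finset (Sym2 (Fin n))}
    (hM : IsMatching G M) (h : N ⊆ M) : IsMatching G N :=
  ⟨fun e he => hM.1 e (h he), fun e he f hf => hM.2 e (h he) f (h hf)⟩

lemma isMatching_insert {G : Fin n → Fin n → Prop} {M : Finset (Sym2 (Fin n))}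
    (hM : IsMatching G M) {e : Sym2 (Fin n)} (he : IsEdge G e)
    (hdisj : ∀ f ∈ M, ∀ v, v ∈ e → v ∉ f) : IsMatching G (insert e M) := by
  constructor
  · intro f hf
    rcases Finset.mem_insert.1 hf with rfl | hf
    · exact he
    · exact hM.1 f hf
  · intro f hf g hg hfg v hv
    rcases Finset.mem_insert.1 hf with rfl | hf2 <;> rcases Finset.mem_insert.1 hg with rfl | hg2
    · exact absurd rfl hfg
    · exact hdisj g hg2 v hv
    · intro hvg; exact hdisj f hf2 v hvg hv
    · exact hM.2 f hf2 g hg2 hfg v hv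

lemma not_mem_of_free {M : Finset (Sym2 (Fin n))}
    {e : Sym2 (Fin n)} (hdisj : ∀ f ∈ M, ∀ v, v ∈ e → v ∉ f) : e ∉ M := by
  intro he
  induction e using Sym2.ind with
  | _ x y => exact hdisj _ he x (by simp) (by simp)

lemma exists_maxMatching : ∃ M, IsMaxMatching (DA A) M := by
  obtain ⟨M, hM, hmax⟩ := Finset.exists_max_image
    ((Finset.univ : Finset (Finset (Sym2 (Fin n)))).filter (fun M => IsMatching (DA A) M))
    Finset.card ⟨∅, by simp [isMatching_empty]⟩
  refine ⟨M, (Finset.mem_filter.1 hM).2, fun M' hM' => hmax M' ?_⟩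
  exact Finset.mem_filter.2 ⟨Finset.mem_univ _, hM'⟩

/-- a pendant vertex can only be matched to its unique neighbor -/
lemma pendant_matched_edge {M : Finset (Sym2 (Fin n))} (hM : IsMatching (DA A) M)
    {p : Fin n} (hp : Pendant (DA A) p) {e : Sym2 (Fin n)} (he : e ∈ M) (hpe : p ∈ e) :
    e = s(p, pnb (DA A) p) := by
  obtain ⟨i, j, rfl, hadj⟩ := hM.1 e he
  rcases Sym2.mem_iff.1 hpe with rfl | rfl
  · rw [pnb_eq hp hadj]
  · rw [Sym2.eq_swap, pnb_eq hp (adjd_symm hadj)]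


end BABaux

namespace BABaux


open scoped Classical

variable {n : ℕ} {A : Matrix (Fin n) (Fin n) ℝ}

lemma sym2_ne_of {a b c d : Fin n} (h1 : a ≠ c) (h2 : a ≠ d) : s(a, b) ≠ s(c, d) := by
  intro h
  rcases Sym2.eq_iff.mp h with ⟨h, -⟩ | ⟨h, -⟩
  exacts [h1 h, h2 h]

lemma matched_unique {M : Finset (Sym2 (Fin n))} (hM : IsMatching (DA A) M)
    {v p p' : Fin n} (h : s(v, p) ∈ M) (h' : s(v, p') ∈ M) : p = p' := by
  have heq := matching_eq_of_mem hM h h' (v := v) (by simp) (by simp)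
  rcases Sym2.eq_iff.mp heq with ⟨-, h⟩ | ⟨h1, h2⟩
  · exact h
  · exact h2.trans h1

/-- every edge of a maximum matching joins a non-pendant vertex with a pendant one -/
lemma max_edge_struct (hD : InClassD (DA A)) (hSC : StronglyConnected (DA A)) (h3 : 3 ≤ n)
    {M : Finset (Sym2 (Fin n))} (hM : IsMaxMatching (DA A) M) {e : Sym2 (Fin n)} (he : e ∈ M) :
    ∃ v p, e = s(v, p) ∧ ¬ Pendant (DA A) v ∧ Pendant (DA A) p ∧ Adjd (DA A) v p := by
  obtain ⟨i, j, rfl, hadj⟩ := hM.1.1 _ he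
  by_cases hpi : Pendant (DA A) i <;> by_cases hpj : Pendant (DA A) j
  · exact absurd hadj (not_adj_pend_pend hD hSC h3 hpi hpj)
  · exact ⟨j, i, Sym2.eq_swap, hpj, hpi, adjd_symm hadj⟩
  · exact ⟨i, j, rfl, hpi, hpj, hadj⟩
  · exfalso
    obtain ⟨p, hpadj, hpp⟩ := hD.2 i hpi
    obtain ⟨q, hqadj, hqp⟩ := hD.2 j hpj
    have hpi' : pnb (DA A) p = i := (pnb_eq hpp (adjd_symm hpadj)).symm
    have hqj' : pnb (DA A) q = j := (pnb_eq hqp (adjd_symm hqadj)).symm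
    have hij : i ≠ j := hadj.1
    have hpq : p ≠ q := fun h => hij (by rw [← hpi', h, hqj'])
    have hpni : p ≠ i := fun h => hpi (h ▸ hpp)
    have hpnj : p ≠ j := fun h => hpj (h ▸ hpp)
    have hqni : q ≠ i := fun h => hpi (h ▸ hqp)
    have hqnj : q ≠ j := fun h => hpj (h ▸ hqp)
    have hpfree : ∀ f ∈ M, p ∉ f := by
      intro f hf hpf
      have hfe : f = s(p, i) := by rw [pendant_matched_edge hM.1 hpp hf hpf, hpi']
      have hne : f ≠ s(i, j) := by
        rw [hfe]; exact sym2_ne_of hpni hpnj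
      exact hM.1.2 f hf s(i, j) he hne i (by rw [hfe]; simp) (by simp)
    have hqfree : ∀ f ∈ M, q ∉ f := by
      intro f hf hqf
      have hfe : f = s(q, j) := by rw [pendant_matched_edge hM.1 hqp hf hqf, hqj']
      have hne : f ≠ s(i, j) := by
        rw [hfe]; exact sym2_ne_of hqni hqnj
      exact hM.1.2 f hf s(i, j) he hne j (by rw [hfe]; simp) (by simp)
    have hM1m : IsMatching (DA A) (M.erase s(i, j)) :=
      isMatching_subset hM.1 (Finset.erase_subset _ _)
    have hdisj2 : ∀ f ∈ M.erase s(i, j), ∀ w, w ∈ s(j, q) → w ∉ f := by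
      intro f hf w hw
      have hfM : f ∈ M := Finset.mem_of_mem_erase hf
      have hfne : f ≠ s(i, j) := (Finset.mem_erase.1 hf).1
      rcases Sym2.mem_iff.1 hw with h | h <;> rw [h]
      · exact fun hwf => hM.1.2 f hfM s(i, j) he hfne j hwf (by simp)
      · exact hqfree f hfM
    have hM2m : IsMatching (DA A) (insert s(j, q) (M.erase s(i, j))) :=
      isMatching_insert hM1m (isEdge_mk.2 hqadj) hdisj2
    have hdisj3 : ∀ f ∈ insert s(j, q) (M.erase s(i, j)), ∀ w, w ∈ s(i, p) → w ∉ f := by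
      intro f hf w hw
      rcases Finset.mem_insert.1 hf with rfl | hf1
      · rcases Sym2.mem_iff.1 hw with h | h <;> rw [h]
        · simp [Sym2.mem_iff, hij, hqni.symm]
        · simp [Sym2.mem_iff, hpnj, hpq]
      · have hfM : f ∈ M := Finset.mem_of_mem_erase hf1
        have hfne : f ≠ s(i, j) := (Finset.mem_erase.1 hf1).1
        rcases Sym2.mem_iff.1 hw with h | h <;> rw [h]
        · exact fun hwf => hM.1.2 f hfM s(i, j) he hfne i hwf (by simp)
        · exact hpfree f hfM
    have hM3m : IsMatching (DA A) (insert s(i, p) (insert s(j, q) (M.erase s(i, j)))) :=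
      isMatching_insert hM2m (isEdge_mk.2 hpadj) hdisj3
    have hc1 : (M.erase s(i, j)).card = M.card - 1 := Finset.card_erase_of_mem he
    have hnm2 : s(j, q) ∉ M.erase s(i, j) := not_mem_of_free hdisj2
    have hnm3 : s(i, p) ∉ insert s(j, q) (M.erase s(i, j)) := not_mem_of_free hdisj3
    have hc2 := Finset.card_insert_of_notMem hnm2
    have hc3 := Finset.card_insert_of_notMem hnm3
    have hMpos : 1 ≤ M.card := Finset.card_pos.2 ⟨_, he⟩
    have := hM.2 _ hM3m
    omega

/-- every non-pendant vertex is saturated by a maximum matching -/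
lemma max_saturates (hD : InClassD (DA A)) {M : Finset (Sym2 (Fin n))}
    (hM : IsMaxMatching (DA A) M) {v : Fin n} (hv : ¬ Pendant (DA A) v) :
    ∃ e ∈ M, v ∈ e := by
  by_contra hun
  push_neg at hun
  obtain ⟨p, hpadj, hpp⟩ := hD.2 v hv
  have hpv : pnb (DA A) p = v := (pnb_eq hpp (adjd_symm hpadj)).symm
  have hdisj : ∀ f ∈ M, ∀ w, w ∈ s(v, p) → w ∉ f := by
    intro f hf w hw
    rcases Sym2.mem_iff.1 hw with h | h <;> rw [h]
    · exact hun f hf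
    · intro hwf
      have hfe := pendant_matched_edge hM.1 hpp hf hwf
      rw [hpv] at hfe
      exact hun f hf (by rw [hfe]; simp)
  have hm' : IsMatching (DA A) (insert s(v, p) M) :=
    isMatching_insert hM.1 (isEdge_mk.2 hpadj) hdisj
  have hnm : s(v, p) ∉ M := not_mem_of_free hdisj
  have := hM.2 _ hm'
  rw [Finset.card_insert_of_notMem hnm] at this
  omega

/-- every non-pendant vertex is matched to a pendant neighbor in a maximum matching -/
lemma max_matched (hD : InClassD (DA A)) (hSC : StronglyConnected (DA A)) (h3 : 3 ≤ n)
    {M : Finset (Sym2 (Fin n))} (hM : IsMaxMatching (DA A) M) {v : Fin n}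
    (hv : ¬ Pendant (DA A) v) :
    ∃ p, Pendant (DA A) p ∧ Adjd (DA A) v p ∧ pnb (DA A) p = v ∧ s(v, p) ∈ M := by
  obtain ⟨e, he, hve⟩ := max_saturates hD hM hv
  obtain ⟨w, p, rfl, hw, hp, hadj⟩ := max_edge_struct hD hSC h3 hM he
  rcases Sym2.mem_iff.1 hve with h | h
  · subst h
    exact ⟨p, hp, hadj, (pnb_eq hp (adjd_symm hadj)).symm, he⟩
  · subst h
    exact absurd hp hv

/-- swapping the pendant partner of a non-pendant vertex preserves maximality -/
lemma swap_isMax (hD : InClassD (DA A)) {M : Finset (Sym2 (Fin n))} {v p p' : Fin n}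
    (hM : IsMaxMatching (DA A) M) (hp' : Adjd (DA A) v p') (hPp' : Pendant (DA A) p')
    (hmem : s(v, p) ∈ M) :
    IsMaxMatching (DA A) (insert s(v, p') (M.erase s(v, p))) ∧ s(v, p') ∉ M.erase s(v, p) := by
  have hp'v : pnb (DA A) p' = v := (pnb_eq hPp' (adjd_symm hp')).symm
  have hdisj : ∀ f ∈ M.erase s(v, p), ∀ w, w ∈ s(v, p') → w ∉ f := by
    intro f hf w hw
    have hfM : f ∈ M := Finset.mem_of_mem_erase hf
    have hfne : f ≠ s(v, p) := (Finset.mem_erase.1 hf).1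
    rcases Sym2.mem_iff.1 hw with h | h <;> rw [h]
    · exact fun hwf => hM.1.2 f hfM s(v, p) hmem hfne v hwf (by simp)
    · intro hwf
      have hfe := pendant_matched_edge hM.1 hPp' hfM hwf
      rw [hp'v] at hfe
      have hmem' : s(v, p') ∈ M := by rw [← Sym2.eq_swap, ← hfe]; exact hfM
      have : p' = p := matched_unique hM.1 hmem' hmem
      exact hfne (by rw [hfe, this, Sym2.eq_swap])
  have hnm : s(v, p') ∉ M.erase s(v, p) := not_mem_of_free hdisj
  have hm' : IsMatching (DA A) (insert s(v, p') (M.erase s(v, p))) :=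
    isMatching_insert (isMatching_subset hM.1 (Finset.erase_subset _ _)) (isEdge_mk.2 hp') hdisj
  have hcard : (insert s(v, p') (M.erase s(v, p))).card = M.card := by
    rw [Finset.card_insert_of_notMem hnm, Finset.card_erase_of_mem hmem]
    have : 1 ≤ M.card := Finset.card_pos.2 ⟨_, hmem⟩
    omega
  exact ⟨⟨hm', fun N hN => (hM.2 N hN).trans_eq hcard.symm⟩, hnm⟩

lemma swap_mem_iff {v p p' : Fin n} {M : Finset (Sym2 (Fin n))} {g : Sym2 (Fin n)}
    (hg1 : g ≠ s(v, p)) (hg2 : g ≠ s(v, p')) :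
    g ∈ insert s(v, p') (M.erase s(v, p)) ↔ g ∈ M := by
  simp [Finset.mem_insert, Finset.mem_erase, hg1, hg2]

lemma exists_max_with_edge (hD : InClassD (DA A)) (hSC : StronglyConnected (DA A)) (h3 : 3 ≤ n)
    {v p : Fin n} (hv : ¬ Pendant (DA A) v) (hadj : Adjd (DA A) v p)
    (hp : Pendant (DA A) p) :
    ∃ M, IsMaxMatching (DA A) M ∧ s(v, p) ∈ M := by
  obtain ⟨M, hM⟩ := exists_maxMatching (A := A)
  obtain ⟨q, hq, hqadj, hqv, hqm⟩ := max_matched hD hSC h3 hM hv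
  exact ⟨insert s(v, p) (M.erase s(v, q)), (swap_isMax hD hM hadj hp hqm).1,
    Finset.mem_insert_self _ _⟩

lemma exists_max_with_two (hD : InClassD (DA A)) (hSC : StronglyConnected (DA A)) (h3 : 3 ≤ n)
    {v p u q : Fin n} (hv : ¬ Pendant (DA A) v) (hu : ¬ Pendant (DA A) u) (hvu : v ≠ u)
    (hadjp : Adjd (DA A) v p) (hp : Pendant (DA A) p)
    (hadjq : Adjd (DA A) u q) (hq : Pendant (DA A) q) :
    ∃ M, IsMaxMatching (DA A) M ∧ s(v, p) ∈ M ∧ s(u, q) ∈ M := by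
  obtain ⟨M, hM, hmem⟩ := exists_max_with_edge hD hSC h3 hv hadjp hp
  obtain ⟨q0, hq0, hq0adj, hq0u, hq0m⟩ := max_matched hD hSC h3 hM hu
  refine ⟨insert s(u, q) (M.erase s(u, q0)), (swap_isMax hD hM hadjq hq hq0m).1, ?_,
    Finset.mem_insert_self _ _⟩
  rw [swap_mem_iff (sym2_ne_of hvu (fun h => (h ▸ hv) hq0)) (sym2_ne_of hvu (fun h => (h ▸ hv) hq))]
  exact hmem


end BABaux

namespace BABaux


open scoped Classical

variable {n : ℕ} {A : Matrix (Fin n) (Fin n) ℝ}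

/-- the pendant neighbors of `v` -/
noncomputable def pf (A : Matrix (Fin n) (Fin n) ℝ) (v : Fin n) : Finset (Fin n) :=
  Finset.univ.filter (fun p => Adjd (DA A) v p ∧ Pendant (DA A) p)

lemma mem_pf {v p : Fin n} : p ∈ pf A v ↔ Adjd (DA A) v p ∧ Pendant (DA A) p := by
  simp [pf]

noncomputable def Sv (A : Matrix (Fin n) (Fin n) ℝ) (v p : Fin n) : ℝ :=
  ∑ M ∈ (maxMatchings A).filter (fun M => s(v, p) ∈ M),
    ∏ e ∈ M.erase s(v, p), cycProd A e

noncomputable def Svw (A : Matrix (Fin n) (Fin n) ℝ) (v p u q : Fin n) : ℝ :=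
  ∑ M ∈ (maxMatchings A).filter (fun M => s(v, p) ∈ M ∧ s(u, q) ∈ M),
    ∏ e ∈ (M.erase s(v, p)).erase s(u, q), cycProd A e

/-- the pendant vertex matched to `v` -/
noncomputable def mp (M : Finset (Sym2 (Fin n))) (v : Fin n) : Fin n :=
  if h : ∃ p, s(v, p) ∈ M then h.choose else v

lemma mp_eq_iff (hD : InClassD (DA A)) (hSC : StronglyConnected (DA A)) (h3 : 3 ≤ n)
    {M : Finset (Sym2 (Fin n))} (hM : IsMaxMatching (DA A) M) {v : Fin n}
    (hv : ¬ Pendant (DA A) v) {p : Fin n} : mp M v = p ↔ s(v, p) ∈ M := by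
  obtain ⟨q, hq, hqadj, hqv, hqm⟩ := max_matched hD hSC h3 hM hv
  have hex : ∃ p, s(v, p) ∈ M := ⟨q, hqm⟩
  have hspec : s(v, mp M v) ∈ M := by
    rw [mp, dif_pos hex]; exact hex.choose_spec
  constructor
  · rintro rfl; exact hspec
  · intro h; exact matched_unique hM.1 hspec h

lemma partition_at (hD : InClassD (DA A)) (hSC : StronglyConnected (DA A)) (h3 : 3 ≤ n)
    {v : Fin n} (hv : ¬ Pendant (DA A) v)
    (T : Finset (Finset (Sym2 (Fin n)))) (hT : T ⊆ maxMatchings A)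
    (F : Finset (Sym2 (Fin n)) → ℝ) :
    ∑ M ∈ T, F M = ∑ p ∈ pf A v, ∑ M ∈ T.filter (fun M => s(v, p) ∈ M), F M := by
  have hmaps : ∀ M ∈ T, mp M v ∈ pf A v := by
    intro M hMT
    have hM : IsMaxMatching (DA A) M := mem_maxMatchings.1 (hT hMT)
    obtain ⟨q, hq, hqadj, hqv, hqm⟩ := max_matched hD hSC h3 hM hv
    have : mp M v = q := (mp_eq_iff hD hSC h3 hM hv).2 hqm
    rw [this, mem_pf]
    exact ⟨hqadj, hq⟩
  rw [← Finset.sum_fiberwise_of_maps_to hmaps F]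
  apply Finset.sum_congr rfl
  intro p _
  apply Finset.sum_congr ?_ (fun _ _ => rfl)
  ext M
  simp only [Finset.mem_filter, and_congr_right_iff]
  intro hMT
  exact mp_eq_iff hD hSC h3 (mem_maxMatchings.1 (hT hMT)) hv

lemma I1 (hD : InClassD (DA A)) (hSC : StronglyConnected (DA A)) (h3 : 3 ≤ n)
    {v : Fin n} (hv : ¬ Pendant (DA A) v) :
    ∑ p ∈ pf A v, A v p * A p v * Sv A v p = Delta A := by
  have h0 := partition_at hD hSC h3 hv (maxMatchings A) (Finset.Subset.refl _) (matchProd A)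
  rw [show Delta A = ∑ M ∈ maxMatchings A, matchProd A M from rfl, h0]
  apply Finset.sum_congr rfl
  intro p _
  rw [Sv, Finset.mul_sum]
  apply Finset.sum_congr rfl
  intro M hM
  have hmem : s(v, p) ∈ M := (Finset.mem_filter.1 hM).2
  rw [show matchProd A M = ∏ e ∈ M, cycProd A e from rfl,
    ← Finset.mul_prod_erase M _ hmem, cycProd_mk]

lemma I2 (hD : InClassD (DA A)) (hSC : StronglyConnected (DA A)) (h3 : 3 ≤ n)
    {v u j : Fin n} (hv : ¬ Pendant (DA A) v) (hvu : v ≠ u)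
    (hadj : Adjd (DA A) u j) (hj : Pendant (DA A) j) :
    ∑ p ∈ pf A v, A v p * A p v * Svw A v p u j = Sv A u j := by
  have h0 := partition_at hD hSC h3 hv ((maxMatchings A).filter (fun M => s(u, j) ∈ M))
    (Finset.filter_subset _ _) (fun M => ∏ e ∈ M.erase s(u, j), cycProd A e)
  rw [Sv, h0]
  apply Finset.sum_congr rfl
  intro p _
  rw [Svw, Finset.mul_sum]
  rw [Finset.filter_filter]
  have hseteq : (maxMatchings A).filter (fun M => s(u, j) ∈ M ∧ s(v, p) ∈ M) =
      (maxMatchings A).filter (fun M => s(v, p) ∈ M ∧ s(u, j) ∈ M) := by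
    apply Finset.filter_congr; intro M _; exact and_comm
  rw [hseteq]
  apply Finset.sum_congr rfl
  intro M hM
  have hmem2 : s(v, p) ∈ M ∧ s(u, j) ∈ M := (Finset.mem_filter.1 hM).2
  have hne : s(v, p) ≠ s(u, j) := sym2_ne_of hvu (fun h => (h ▸ hv) hj)
  have hmem' : s(v, p) ∈ M.erase s(u, j) := Finset.mem_erase.2 ⟨hne, hmem2.1⟩
  rw [← Finset.mul_prod_erase _ _ hmem', cycProd_mk, Finset.erase_right_comm]

lemma Sv_rematch (hD : InClassD (DA A))
    {v p p' : Fin n}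
    (hadjp : Adjd (DA A) v p) (hp : Pendant (DA A) p)
    (hadjp' : Adjd (DA A) v p') (hp' : Pendant (DA A) p') :
    Sv A v p = Sv A v p' := by
  rcases eq_or_ne p p' with rfl | hne
  · rfl
  rw [Sv, Sv]
  refine Finset.sum_bij'
    (fun M _ => insert s(v, p') (M.erase s(v, p)))
    (fun M _ => insert s(v, p) (M.erase s(v, p'))) ?hi ?hj ?li ?ri ?hval
  case hi =>
    intro M hM
    have hmax := mem_maxMatchings.1 (Finset.mem_filter.1 hM).1
    have hmem := (Finset.mem_filter.1 hM).2
    exact Finset.mem_filter.2 ⟨mem_maxMatchings.2 (swap_isMax hD hmax hadjp' hp' hmem).1,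
      Finset.mem_insert_self _ _⟩
  case hj =>
    intro M hM
    have hmax := mem_maxMatchings.1 (Finset.mem_filter.1 hM).1
    have hmem := (Finset.mem_filter.1 hM).2
    exact Finset.mem_filter.2 ⟨mem_maxMatchings.2 (swap_isMax hD hmax hadjp hp hmem).1,
      Finset.mem_insert_self _ _⟩
  case li =>
    intro M hM
    have hmax := mem_maxMatchings.1 (Finset.mem_filter.1 hM).1
    have hmem := (Finset.mem_filter.1 hM).2
    have hnm := (swap_isMax hD hmax hadjp' hp' hmem).2
    rw [Finset.erase_insert hnm, Finset.insert_erase hmem]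
  case ri =>
    intro M hM
    have hmax := mem_maxMatchings.1 (Finset.mem_filter.1 hM).1
    have hmem := (Finset.mem_filter.1 hM).2
    have hnm := (swap_isMax hD hmax hadjp hp hmem).2
    rw [Finset.erase_insert hnm, Finset.insert_erase hmem]
  case hval =>
    intro M hM
    have hmax := mem_maxMatchings.1 (Finset.mem_filter.1 hM).1
    have hmem := (Finset.mem_filter.1 hM).2
    have hnm := (swap_isMax hD hmax hadjp' hp' hmem).2
    rw [Finset.erase_insert hnm]

lemma Svw_comm {v p u q : Fin n} : Svw A v p u q = Svw A u q v p := by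
  rw [Svw, Svw]
  have hseteq : (maxMatchings A).filter (fun M => s(v, p) ∈ M ∧ s(u, q) ∈ M) =
      (maxMatchings A).filter (fun M => s(u, q) ∈ M ∧ s(v, p) ∈ M) := by
    apply Finset.filter_congr; intro M _; exact and_comm
  rw [hseteq]
  exact Finset.sum_congr rfl (fun M _ => by rw [Finset.erase_right_comm])

lemma Svw_rematch (hD : InClassD (DA A))
    {v p u q q' : Fin n} (hv : ¬ Pendant (DA A) v) (hvu : v ≠ u)
    (hadjq : Adjd (DA A) u q) (hq : Pendant (DA A) q)
    (hadjq' : Adjd (DA A) u q') (hq' : Pendant (DA A) q') :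
    Svw A v p u q = Svw A v p u q' := by
  rcases eq_or_ne q q' with rfl | hne
  · rfl
  have key : ∀ (a b : Fin n), Pendant (DA A) a → Pendant (DA A) b →
      s(v, p) ≠ s(u, a) → True := fun _ _ _ _ _ => trivial
  have hne1 : s(v, p) ≠ s(u, q) := sym2_ne_of hvu (fun h => (h ▸ hv) hq)
  have hne2 : s(v, p) ≠ s(u, q') := sym2_ne_of hvu (fun h => (h ▸ hv) hq')
  rw [Svw, Svw]
  refine Finset.sum_bij'
    (fun M _ => insert s(u, q') (M.erase s(u, q)))
    (fun M _ => insert s(u, q) (M.erase s(u, q'))) ?hi ?hj ?li ?ri ?hval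
  case hi =>
    intro M hM
    have hmax := mem_maxMatchings.1 (Finset.mem_filter.1 hM).1
    have hmem := (Finset.mem_filter.1 hM).2
    refine Finset.mem_filter.2 ⟨mem_maxMatchings.2 (swap_isMax hD hmax hadjq' hq' hmem.2).1, ?_,
      Finset.mem_insert_self _ _⟩
    rw [swap_mem_iff hne1 hne2]; exact hmem.1
  case hj =>
    intro M hM
    have hmax := mem_maxMatchings.1 (Finset.mem_filter.1 hM).1
    have hmem := (Finset.mem_filter.1 hM).2
    refine Finset.mem_filter.2 ⟨mem_maxMatchings.2 (swap_isMax hD hmax hadjq hq hmem.2).1, ?_,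
      Finset.mem_insert_self _ _⟩
    rw [swap_mem_iff hne2 hne1]; exact hmem.1
  case li =>
    intro M hM
    have hmax := mem_maxMatchings.1 (Finset.mem_filter.1 hM).1
    have hmem := (Finset.mem_filter.1 hM).2
    have hnm := (swap_isMax hD hmax hadjq' hq' hmem.2).2
    rw [Finset.erase_insert hnm, Finset.insert_erase hmem.2]
  case ri =>
    intro M hM
    have hmax := mem_maxMatchings.1 (Finset.mem_filter.1 hM).1
    have hmem := (Finset.mem_filter.1 hM).2
    have hnm := (swap_isMax hD hmax hadjq hq hmem.2).2
    rw [Finset.erase_insert hnm, Finset.insert_erase hmem.2]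
  case hval =>
    intro M hM
    have hmax := mem_maxMatchings.1 (Finset.mem_filter.1 hM).1
    have hmem := (Finset.mem_filter.1 hM).2
    have hnm := (swap_isMax hD hmax hadjq' hq' hmem.2).2
    have hseteq : ((insert s(u, q') (M.erase s(u, q))).erase s(v, p)).erase s(u, q')
        = (M.erase s(u, q)).erase s(v, p) := by
      rw [Finset.erase_right_comm, Finset.erase_insert hnm]
    rw [hseteq, Finset.erase_right_comm]

lemma prod_identity (hD : InClassD (DA A)) (hSC : StronglyConnected (DA A)) (h3 : 3 ≤ n)
    {v i u j : Fin n} (hv : ¬ Pendant (DA A) v)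
    (hadji : Adjd (DA A) v i) (hi : Pendant (DA A) i)
    (hu : ¬ Pendant (DA A) u) (hvu : v ≠ u)
    (hadjj : Adjd (DA A) u j) (hj : Pendant (DA A) j) :
    Sv A v i * Sv A u j = Delta A * Svw A v i u j := by
  have h1 : Sv A v i = (∑ q ∈ pf A u, A u q * A q u) * Svw A v i u j := by
    have h2 := I2 hD hSC h3 hu hvu.symm hadji hi
    rw [← h2, Finset.sum_mul]
    apply Finset.sum_congr rfl
    intro q hq
    rw [mem_pf] at hq
    rw [Svw_comm (v := u) (p := q) (u := v) (q := i),
      Svw_rematch hD hv hvu hq.1 hq.2 hadjj hj]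
  have h2 : Delta A = (∑ q ∈ pf A u, A u q * A q u) * Sv A u j := by
    rw [← I1 hD hSC h3 hu, Finset.sum_mul]
    apply Finset.sum_congr rfl
    intro q hq
    rw [mem_pf] at hq
    rw [Sv_rematch hD hq.1 hq.2 hadjj hj]
  rw [h1, h2]; ring


end BABaux

namespace BABaux


open scoped Classical

variable {n : ℕ} {A : Matrix (Fin n) (Fin n) ℝ}

lemma chainEdges_length (c : List (Fin n)) : (chainEdges c).length = c.length - 1 := by
  simp only [chainEdges, List.length_zipWith, List.length_tail]
  omega

lemma chainEdges_get (c : List (Fin n)) (k : ℕ) (h : k < (chainEdges c).length)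
    (h1 : k < c.length) (h2 : k + 1 < c.length) :
    (chainEdges c).get ⟨k, h⟩ = s(c.get ⟨k, h1⟩, c.get ⟨k + 1, h2⟩) := by
  simp only [chainEdges, List.get_eq_getElem, List.getElem_zipWith, List.getElem_tail]

lemma chain_classify (hD : InClassD (DA A)) (hSC : StronglyConnected (DA A)) (h3 : 3 ≤ n)
    {M : Finset (Sym2 (Fin n))} {c : List (Fin n)} {i j : Fin n}
    (hM : IsMaxMatching (DA A) M) (hc : IsCycleChainBtw (DA A) i j c) (ha : IsAltChain M c) :
    (c = [i, j] ∧ s(i, j) ∈ M) ∨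
    (∃ v w, c = [i, v, w, j] ∧ Pendant (DA A) i ∧ Pendant (DA A) j ∧
      ¬ Pendant (DA A) v ∧ ¬ Pendant (DA A) w ∧ v = pnb (DA A) i ∧ w = pnb (DA A) j ∧
      s(i, v) ∈ M ∧ s(w, j) ∈ M ∧ i ≠ j ∧ v ≠ w ∧ Adjd (DA A) v w) := by
  obtain ⟨⟨hnodup, hlen2, hchain⟩, hhead, hlast⟩ := hc
  obtain ⟨hodd, halt⟩ := ha
  have hlenE : (chainEdges c).length = c.length - 1 := chainEdges_length c
  have hC := List.isChain_iff_getElem.1 hchain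
  -- interior edges of the chain cannot belong to M
  have hint : ∀ k, 1 ≤ k → k + 2 ≤ c.length - 1 → ∀ hk : k < (chainEdges c).length,
      (chainEdges c).get ⟨k, hk⟩ ∉ M := by
    intro k hk1' hk2' hk hmem
    have hk1 : k < c.length := by omega
    have hk2 : k + 1 < c.length := by omega
    have hk0 : k - 1 < c.length := by omega
    have hk3 : k + 2 < c.length := by omega
    rw [chainEdges_get c k hk hk1 hk2] at hmem
    obtain ⟨v0, p0, heq, hv0, hp0, hadj0⟩ := max_edge_struct hD hSC h3 hM hmem
    have hadjk : Adjd (DA A) (c.get ⟨k, hk1⟩) (c.get ⟨k + 1, hk2⟩) := by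
      have := hC k (by omega)
      simpa using this
    have hadjprev : Adjd (DA A) (c.get ⟨k - 1, hk0⟩) (c.get ⟨k, hk1⟩) := by
      have := hC (k - 1) (by omega)
      have hkk : k - 1 + 1 = k := by omega
      simp only [hkk] at this
      simpa using this
    have hadjnext : Adjd (DA A) (c.get ⟨k + 1, hk2⟩) (c.get ⟨k + 2, hk3⟩) := by
      have := hC (k + 1) (by omega)
      simpa using this
    have getinj : ∀ (a b : ℕ) (ha' : a < c.length) (hb : b < c.length),
        c.get ⟨a, ha'⟩ = c.get ⟨b, hb⟩ → a = b := by
      intro a b ha' hb hab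
      exact congrArg Fin.val ((List.Nodup.get_inj_iff hnodup).1 hab)
    rcases Sym2.eq_iff.mp heq with ⟨h1e, h2e⟩ | ⟨h1e, h2e⟩
    · -- c_{k+1} = p0 pendant
      have hpk1 : Pendant (DA A) (c.get ⟨k + 1, hk2⟩) := h2e ▸ hp0
      have e1 := pnb_eq hpk1 (adjd_symm hadjk)
      have e2 := pnb_eq hpk1 hadjnext
      have : k = k + 2 := getinj _ _ _ _ (e1.trans e2.symm)
      omega
    · -- c_k = p0 pendant
      have hpk : Pendant (DA A) (c.get ⟨k, hk1⟩) := h1e ▸ hp0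
      have e1 := pnb_eq hpk (adjd_symm hadjprev)
      have e2 := pnb_eq hpk hadjk
      have : k - 1 = k + 1 := getinj _ _ _ _ (e1.trans e2.symm)
      omega
  have hL4 : c.length ≤ 4 := by
    by_contra hL
    push_neg at hL
    have h2lt : 2 < (chainEdges c).length := by omega
    exact hint 2 (by omega) (by omega) h2lt ((halt 2 h2lt).2 (by norm_num))
  have hL24 : c.length = 2 ∨ c.length = 4 := by
    obtain ⟨m, hm⟩ := hodd
    omega
  rcases hL24 with hL | hL
  · -- c = [i, j]
    obtain ⟨a, b, rfl⟩ := List.length_eq_two.1 hL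
    have ha' : a = i := by simpa using hhead
    have hb' : b = j := by simpa using hlast
    subst ha'; subst hb'
    left
    have h0 : 0 < (chainEdges [a, b]).length := by simp [chainEdges_length]
    have := (halt 0 h0).2 (by norm_num)
    refine ⟨rfl, ?_⟩
    simpa [chainEdges] using this
  · -- c = [a, b, w, d] with a = i, d = j
    rcases c with _ | ⟨a, c⟩; · simp at hL
    rcases c with _ | ⟨b, c⟩; · simp at hL
    rcases c with _ | ⟨w, c⟩; · simp at hL
    rcases c with _ | ⟨d, c⟩; · simp at hL
    rcases c with _ | ⟨x, c⟩
    swap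
    · simp at hL
    have ha' : a = i := by simpa using hhead
    have hd' : d = j := by simpa using hlast
    subst ha'; subst hd'
    right
    have hE : chainEdges [a, b, w, d] = [s(a, b), s(b, w), s(w, d)] := rfl
    simp only [hE] at halt
    have e0 : s(a, b) ∈ M := by
      have := (halt 0 (by norm_num)).2 (by norm_num)
      simpa [hE] using this
    have e2 : s(w, d) ∈ M := by
      have := (halt 2 (by norm_num)).2 (by norm_num)
      simpa [hE] using this
    simp only [List.nodup_cons, List.mem_cons, List.mem_singleton, List.not_mem_nil,
      or_false, not_or, List.nodup_nil, and_true] at hnodup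
    obtain ⟨⟨hib, hiw, hij⟩, ⟨hbw, hbj⟩, hwj⟩ := hnodup
    simp only [List.Chain', List.isChain_cons_cons, List.isChain_singleton, and_true] at hchain
    obtain ⟨aib, abw, awj⟩ := hchain
    obtain ⟨v0, p0, heq, hv0, hp0, -⟩ := max_edge_struct hD hSC h3 hM e0
    have hib' : Pendant (DA A) a ∧ ¬ Pendant (DA A) b := by
      rcases Sym2.eq_iff.mp heq with ⟨h1e, h2e⟩ | ⟨h1e, h2e⟩
      · exfalso
        have hpb : Pendant (DA A) b := h2e ▸ hp0
        have u1 := pnb_eq hpb (adjd_symm aib)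
        have u2 := pnb_eq hpb abw
        exact hiw (u1.trans u2.symm)
      · exact ⟨h1e ▸ hp0, h2e ▸ hv0⟩
    obtain ⟨v1, p1, heq1, hv1, hp1, -⟩ := max_edge_struct hD hSC h3 hM e2
    have hjw' : Pendant (DA A) d ∧ ¬ Pendant (DA A) w := by
      rcases Sym2.eq_iff.mp heq1 with ⟨h1e, h2e⟩ | ⟨h1e, h2e⟩
      · exact ⟨h2e ▸ hp1, h1e ▸ hv1⟩
      · exfalso
        have hpw : Pendant (DA A) w := h1e ▸ hp1
        have u1 := pnb_eq hpw (adjd_symm abw)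
        have u2 := pnb_eq hpw awj
        exact hbj (u1.trans u2.symm)
    exact ⟨b, w, rfl, hib'.1, hjw'.1, hib'.2, hjw'.2,
      pnb_eq hib'.1 aib, pnb_eq hjw'.1 (adjd_symm awj), e0, e2, hij, hbw, abw⟩


end BABaux

namespace BABaux


open scoped Classical

variable {n : ℕ} {A : Matrix (Fin n) (Fin n) ℝ}

lemma pend_ne_nonpend {p v : Fin n} (hp : Pendant (DA A) p) (hv : ¬ Pendant (DA A) v) :
    p ≠ v := fun h => hv (h ▸ hp)

lemma nonpend_edge_not_mem (hD : InClassD (DA A)) (hSC : StronglyConnected (DA A)) (h3 : 3 ≤ n)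
    {M : Finset (Sym2 (Fin n))} (hM : IsMaxMatching (DA A) M) {v w : Fin n}
    (hv : ¬ Pendant (DA A) v) (hw : ¬ Pendant (DA A) w) : s(v, w) ∉ M := by
  intro h
  obtain ⟨v0, p0, heq, hv0, hp0, -⟩ := max_edge_struct hD hSC h3 hM h
  rcases Sym2.eq_iff.mp heq with ⟨-, h2e⟩ | ⟨h1e, -⟩
  · exact hw (h2e ▸ hp0)
  · exact hv (h1e ▸ hp0)

lemma altchain_short {M : Finset (Sym2 (Fin n))} {i v : Fin n}
    (hadj : Adjd (DA A) i v) (hmem : s(i, v) ∈ M) :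
    IsCycleChainBtw (DA A) i v [i, v] ∧ IsAltChain M [i, v] := by
  refine ⟨⟨⟨by simp [hadj.1], by simp, by simp [List.Chain', hadj]⟩, rfl, by simp⟩, ?_, ?_⟩
  · rw [show (chainEdges [i, v]).length = 1 from rfl]
    exact odd_one
  · intro k hk
    have hk1 : (chainEdges [i, v]).length = 1 := rfl
    have hk0 : k = 0 := by omega
    subst hk0
    simpa [chainEdges] using hmem

lemma altchain_long {M : Finset (Sym2 (Fin n))} {i v w j : Fin n}
    (hiv : i ≠ v) (hiw : i ≠ w) (hij : i ≠ j) (hvw : v ≠ w) (hvj : v ≠ j) (hwj : w ≠ j)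
    (a1 : Adjd (DA A) i v) (a2 : Adjd (DA A) v w) (a3 : Adjd (DA A) w j)
    (e0 : s(i, v) ∈ M) (e2 : s(w, j) ∈ M) (e1 : s(v, w) ∉ M) :
    IsCycleChainBtw (DA A) i j [i, v, w, j] ∧ IsAltChain M [i, v, w, j] := by
  refine ⟨⟨⟨by simp [hiv, hiw, hij, hvw, hvj, hwj], by simp, by simp [List.Chain', a1, a2, a3]⟩,
    rfl, by simp⟩, ?_, ?_⟩
  · rw [show (chainEdges [i, v, w, j]).length = 3 from rfl]
    exact ⟨1, rfl⟩
  · intro k hk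
    have hk1 : (chainEdges [i, v, w, j]).length = 3 := rfl
    have hk' : k < 3 := hk1 ▸ hk
    interval_cases k
    · simpa [chainEdges] using e0
    · simp only [chainEdges]
      constructor
      · intro hmem
        exact absurd (by simpa using hmem) e1
      · intro h
        exact absurd h (by norm_num)
    · simpa [chainEdges] using e2

lemma mem_MMset {M : Finset (Sym2 (Fin n))} {i j : Fin n} :
    M ∈ MMset A i j ↔ IsMaxMatching (DA A) M ∧
      ∃ c, IsCycleChainBtw (DA A) i j c ∧ IsAltChain M c := Iff.rfl

lemma matchable_cases (hD : InClassD (DA A)) (hSC : StronglyConnected (DA A)) (h3 : 3 ≤ n)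
    {i j : Fin n} (h : MaxMatchable A i j) :
    (Pendant (DA A) i ∧ ¬ Pendant (DA A) j ∧ j = pnb (DA A) i) ∨
    (Pendant (DA A) j ∧ ¬ Pendant (DA A) i ∧ i = pnb (DA A) j) ∨
    (Pendant (DA A) i ∧ Pendant (DA A) j ∧ i ≠ j ∧ pnb (DA A) i ≠ pnb (DA A) j ∧
      Adjd (DA A) (pnb (DA A) i) (pnb (DA A) j)) := by
  obtain ⟨M, hmax, c, hbtw, halt⟩ := h
  rcases chain_classify hD hSC h3 hmax hbtw halt with ⟨-, hmem⟩ |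
    ⟨v, w, -, hpi, hpj, -, -, hv, hw, -, -, hij, hvw, hadj⟩
  · obtain ⟨v0, p0, heq, hv0, hp0, hadj0⟩ := max_edge_struct hD hSC h3 hmax hmem
    rcases Sym2.eq_iff.mp heq with ⟨h1e, h2e⟩ | ⟨h1e, h2e⟩
    · subst h1e; subst h2e
      exact Or.inr (Or.inl ⟨hp0, hv0, pnb_eq hp0 (adjd_symm hadj0)⟩)
    · subst h1e; subst h2e
      exact Or.inl ⟨hp0, hv0, pnb_eq hp0 (adjd_symm hadj0)⟩
  · subst hv; subst hw
    exact Or.inr (Or.inr ⟨hpi, hpj, hij, hvw, hadj⟩)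

lemma mu_zero {i j : Fin n} (h : ¬ MaxMatchable A i j) : mu A i j = 0 := by
  unfold mu beta
  rw [if_neg h, zero_mul]

lemma matchable_pv (hD : InClassD (DA A)) (hSC : StronglyConnected (DA A)) (h3 : 3 ≤ n)
    {p : Fin n} (hp : Pendant (DA A) p) :
    MaxMatchable A p (pnb (DA A) p) ∧ MaxMatchable A (pnb (DA A) p) p := by
  obtain ⟨M, hM, hmem⟩ := exists_max_with_edge hD hSC h3 (pnb_not_pendant hD hSC h3 hp)
    (adjd_symm (pnb_adj hp)) hp
  have hmem' : s(p, pnb (DA A) p) ∈ M := by rw [Sym2.eq_swap]; exact hmem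
  constructor
  · obtain ⟨hbtw, halt⟩ := altchain_short (pnb_adj hp) hmem'
    exact ⟨M, hM, [p, pnb (DA A) p], hbtw, halt⟩
  · obtain ⟨hbtw, halt⟩ := altchain_short (adjd_symm (pnb_adj hp)) hmem
    exact ⟨M, hM, [pnb (DA A) p, p], hbtw, halt⟩

lemma MMset_char_pv (hD : InClassD (DA A)) (hSC : StronglyConnected (DA A)) (h3 : 3 ≤ n)
    {p : Fin n} (hp : Pendant (DA A) p) {M : Finset (Sym2 (Fin n))} :
    (M ∈ MMset A p (pnb (DA A) p) ↔ IsMaxMatching (DA A) M ∧ s(pnb (DA A) p, p) ∈ M) ∧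
    (M ∈ MMset A (pnb (DA A) p) p ↔ IsMaxMatching (DA A) M ∧ s(pnb (DA A) p, p) ∈ M) := by
  constructor
  · constructor
    · rintro ⟨hmax, c, hbtw, halt⟩
      refine ⟨hmax, ?_⟩
      rcases chain_classify hD hSC h3 hmax hbtw halt with ⟨-, hmem⟩ |
        ⟨v, w, -, -, hpj, -, -, -, -, -, -, -, -, -⟩
      · rw [Sym2.eq_swap] at hmem; exact hmem
      · exact absurd hpj (pnb_not_pendant hD hSC h3 hp)
    · rintro ⟨hmax, hmem⟩
      have hmem' : s(p, pnb (DA A) p) ∈ M := by rw [Sym2.eq_swap]; exact hmem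
      obtain ⟨hbtw, halt⟩ := altchain_short (pnb_adj hp) hmem'
      exact ⟨hmax, [p, pnb (DA A) p], hbtw, halt⟩
  · constructor
    · rintro ⟨hmax, c, hbtw, halt⟩
      refine ⟨hmax, ?_⟩
      rcases chain_classify hD hSC h3 hmax hbtw halt with ⟨-, hmem⟩ |
        ⟨v, w, -, hpi, -, -, -, -, -, -, -, -, -, -⟩
      · exact hmem
      · exact absurd hpi (pnb_not_pendant hD hSC h3 hp)
    · rintro ⟨hmax, hmem⟩
      obtain ⟨hbtw, halt⟩ := altchain_short (adjd_symm (pnb_adj hp)) hmem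
      exact ⟨hmax, [pnb (DA A) p, p], hbtw, halt⟩

lemma MMset_char_pq (hD : InClassD (DA A)) (hSC : StronglyConnected (DA A)) (h3 : 3 ≤ n)
    {p q : Fin n} (hp : Pendant (DA A) p) (hq : Pendant (DA A) q) (hne : p ≠ q)
    (hpnb : pnb (DA A) p ≠ pnb (DA A) q) {M : Finset (Sym2 (Fin n))} :
    M ∈ MMset A p q ↔ IsMaxMatching (DA A) M ∧ Adjd (DA A) (pnb (DA A) p) (pnb (DA A) q) ∧
      s(pnb (DA A) p, p) ∈ M ∧ s(pnb (DA A) q, q) ∈ M := by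
  have hvp := pnb_not_pendant hD hSC h3 hp
  have hvq := pnb_not_pendant hD hSC h3 hq
  constructor
  · rintro ⟨hmax, c, hbtw, halt⟩
    rcases chain_classify hD hSC h3 hmax hbtw halt with ⟨-, hmem⟩ |
      ⟨v, w, -, -, -, -, -, hv, hw, he0, he2, -, -, hadj⟩
    · exfalso
      obtain ⟨v0, p0, heq, hv0, -, -⟩ := max_edge_struct hD hSC h3 hmax hmem
      rcases Sym2.eq_iff.mp heq with ⟨h1e, -⟩ | ⟨-, h2e⟩
      · exact hv0 (h1e ▸ hp)
      · exact hv0 (h2e ▸ hq)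
    · subst hv; subst hw
      refine ⟨hmax, hadj, ?_, ?_⟩
      · rw [Sym2.eq_swap] at he0; exact he0
      · exact he2
  · rintro ⟨hmax, hadj, hmem1, hmem2⟩
    have hmem1' : s(p, pnb (DA A) p) ∈ M := by rw [Sym2.eq_swap]; exact hmem1
    have hvw : s(pnb (DA A) p, pnb (DA A) q) ∉ M := nonpend_edge_not_mem hD hSC h3 hmax hvp hvq
    obtain ⟨hbtw, halt⟩ := altchain_long (pend_ne_nonpend hp hvp)
      (pend_ne_nonpend hp hvq) hne hpnb (pend_ne_nonpend hq hvp).symm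
      (pend_ne_nonpend hq hvq).symm (pnb_adj hp) hadj (adjd_symm (pnb_adj hq))
      hmem1' hmem2 hvw
    exact ⟨hmax, [p, pnb (DA A) p, pnb (DA A) q, q], hbtw, halt⟩


end BABaux

namespace BABaux


open scoped Classical

variable {n : ℕ} {A : Matrix (Fin n) (Fin n) ℝ}

lemma theChain_pv (hD : InClassD (DA A)) (hSC : StronglyConnected (DA A)) (h3 : 3 ≤ n)
    {p : Fin n} (hp : Pendant (DA A) p) :
    theChain A p (pnb (DA A) p) = [p, pnb (DA A) p] := by
  obtain ⟨M, hmax, c0, hbtw0, halt0⟩ := (matchable_pv hD hSC h3 hp).1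
  have hex : ∃ c, IsCycleChainBtw (DA A) p (pnb (DA A) p) c ∧
      ∃ M ∈ MMset A p (pnb (DA A) p), IsAltChain M c :=
    ⟨c0, hbtw0, M, ⟨hmax, c0, hbtw0, halt0⟩, halt0⟩
  unfold theChain
  rw [dif_pos hex]
  obtain ⟨hbtw, M1, hMM1, halt⟩ := hex.choose_spec
  rcases chain_classify hD hSC h3 hMM1.1 hbtw halt with ⟨hc, -⟩ |
    ⟨v, w, -, -, hpj, -, -, -, -, -, -, -, -, -⟩
  · exact hc
  · exact absurd hpj (pnb_not_pendant hD hSC h3 hp)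

lemma theChain_vp (hD : InClassD (DA A)) (hSC : StronglyConnected (DA A)) (h3 : 3 ≤ n)
    {p : Fin n} (hp : Pendant (DA A) p) :
    theChain A (pnb (DA A) p) p = [pnb (DA A) p, p] := by
  obtain ⟨M, hmax, c0, hbtw0, halt0⟩ := (matchable_pv hD hSC h3 hp).2
  have hex : ∃ c, IsCycleChainBtw (DA A) (pnb (DA A) p) p c ∧
      ∃ M ∈ MMset A (pnb (DA A) p) p, IsAltChain M c :=
    ⟨c0, hbtw0, M, ⟨hmax, c0, hbtw0, halt0⟩, halt0⟩
  unfold theChain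
  rw [dif_pos hex]
  obtain ⟨hbtw, M1, hMM1, halt⟩ := hex.choose_spec
  rcases chain_classify hD hSC h3 hMM1.1 hbtw halt with ⟨hc, -⟩ |
    ⟨v, w, -, hpi, -, -, -, -, -, -, -, -, -, -⟩
  · exact hc
  · exact absurd hpi (pnb_not_pendant hD hSC h3 hp)

lemma theChain_pq (hD : InClassD (DA A)) (hSC : StronglyConnected (DA A)) (h3 : 3 ≤ n)
    {p q : Fin n} (hp : Pendant (DA A) p) (hq : Pendant (DA A) q) (hne : p ≠ q)
    (hpnb : pnb (DA A) p ≠ pnb (DA A) q)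
    (hadj : Adjd (DA A) (pnb (DA A) p) (pnb (DA A) q)) :
    theChain A p q = [p, pnb (DA A) p, pnb (DA A) q, q] := by
  obtain ⟨M, hmax, h1, h2⟩ := exists_max_with_two hD hSC h3
    (pnb_not_pendant hD hSC h3 hp) (pnb_not_pendant hD hSC h3 hq) hpnb
    (adjd_symm (pnb_adj hp)) hp (adjd_symm (pnb_adj hq)) hq
  have hMM : M ∈ MMset A p q := (MMset_char_pq hD hSC h3 hp hq hne hpnb).2
    ⟨hmax, hadj, h1, h2⟩
  obtain ⟨c0, hbtw0, halt0⟩ := hMM.2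
  have hex : ∃ c, IsCycleChainBtw (DA A) p q c ∧ ∃ M ∈ MMset A p q, IsAltChain M c :=
    ⟨c0, hbtw0, M, hMM, halt0⟩
  unfold theChain
  rw [dif_pos hex]
  obtain ⟨hbtw, M1, hMM1, halt⟩ := hex.choose_spec
  rcases chain_classify hD hSC h3 hMM1.1 hbtw halt with ⟨-, hmem⟩ |
    ⟨v, w, hc, -, -, -, -, hv, hw, -, -, -, -, -⟩
  · exfalso
    obtain ⟨v0, p0, heq, hv0, -, -⟩ := max_edge_struct hD hSC h3 hMM1.1 hmem
    rcases Sym2.eq_iff.mp heq with ⟨h1e, -⟩ | ⟨-, h2e⟩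
    · exact hv0 (h1e ▸ hp)
    · exact hv0 (h2e ▸ hq)
  · subst hv; subst hw; exact hc

lemma mu_pv (hD : InClassD (DA A)) (hSC : StronglyConnected (DA A)) (h3 : 3 ≤ n)
    {p : Fin n} (hp : Pendant (DA A) p) :
    mu A p (pnb (DA A) p) = A p (pnb (DA A) p) * Sv A (pnb (DA A) p) p := by
  have hmm := (matchable_pv hD hSC h3 hp).1
  have hch := theChain_pv hD hSC h3 hp
  have hsetF : (MMset A p (pnb (DA A) p)).toFinite.toFinset =
      (maxMatchings A).filter (fun M => s(pnb (DA A) p, p) ∈ M) := by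
    ext M
    rw [Set.Finite.mem_toFinset]
    rw [Finset.mem_filter, mem_maxMatchings]
    exact (MMset_char_pv hD hSC h3 hp).1
  unfold mu
  rw [hsetF]
  have hbeta : beta A p (pnb (DA A) p) = A p (pnb (DA A) p) := by
    unfold beta
    rw [if_pos hmm, hch]
    simp [pathProd]
  rw [hbeta, Sv]
  congr 1
  apply Finset.sum_congr rfl
  intro M hM
  unfold betaBar
  rw [hch]
  have hCE : chainEdges [p, pnb (DA A) p] = [s(pnb (DA A) p, p)] := by
    rw [show chainEdges [p, pnb (DA A) p] = [s(p, pnb (DA A) p)] from rfl, Sym2.eq_swap]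
  rw [hCE]
  congr 1
  ext e
  simp only [Finset.mem_filter, Finset.mem_erase, List.mem_singleton]
  tauto

lemma mu_vp (hD : InClassD (DA A)) (hSC : StronglyConnected (DA A)) (h3 : 3 ≤ n)
    {p : Fin n} (hp : Pendant (DA A) p) :
    mu A (pnb (DA A) p) p = A (pnb (DA A) p) p * Sv A (pnb (DA A) p) p := by
  have hmm := (matchable_pv hD hSC h3 hp).2
  have hch := theChain_vp hD hSC h3 hp
  have hsetF : (MMset A (pnb (DA A) p) p).toFinite.toFinset =
      (maxMatchings A).filter (fun M => s(pnb (DA A) p, p) ∈ M) := by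
    ext M
    rw [Set.Finite.mem_toFinset]
    rw [Finset.mem_filter, mem_maxMatchings]
    exact (MMset_char_pv hD hSC h3 hp).2
  unfold mu
  rw [hsetF]
  have hbeta : beta A (pnb (DA A) p) p = A (pnb (DA A) p) p := by
    unfold beta
    rw [if_pos hmm, hch]
    simp [pathProd]
  rw [hbeta, Sv]
  congr 1
  apply Finset.sum_congr rfl
  intro M hM
  unfold betaBar
  rw [hch]
  have hCE : chainEdges [pnb (DA A) p, p] = [s(pnb (DA A) p, p)] := rfl
  rw [hCE]
  congr 1
  ext e
  simp only [Finset.mem_filter, Finset.mem_erase, List.mem_singleton]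
  tauto

lemma mu_pq (hD : InClassD (DA A)) (hSC : StronglyConnected (DA A)) (h3 : 3 ≤ n)
    {p q : Fin n} (hp : Pendant (DA A) p) (hq : Pendant (DA A) q) (hne : p ≠ q)
    (hpnb : pnb (DA A) p ≠ pnb (DA A) q) :
    mu A p q = -(A p (pnb (DA A) p) * A (pnb (DA A) p) (pnb (DA A) q) * A (pnb (DA A) q) q) *
      Svw A (pnb (DA A) p) p (pnb (DA A) q) q := by
  by_cases hadj : Adjd (DA A) (pnb (DA A) p) (pnb (DA A) q)
  · -- computable case
    obtain ⟨M0, hmax0, h10, h20⟩ := exists_max_with_two hD hSC h3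
      (pnb_not_pendant hD hSC h3 hp) (pnb_not_pendant hD hSC h3 hq) hpnb
      (adjd_symm (pnb_adj hp)) hp (adjd_symm (pnb_adj hq)) hq
    have hmm : MaxMatchable A p q :=
      ⟨M0, (MMset_char_pq hD hSC h3 hp hq hne hpnb).2 ⟨hmax0, hadj, h10, h20⟩⟩
    have hch := theChain_pq hD hSC h3 hp hq hne hpnb hadj
    have hsetF : (MMset A p q).toFinite.toFinset = (maxMatchings A).filter
        (fun M => s(pnb (DA A) p, p) ∈ M ∧ s(pnb (DA A) q, q) ∈ M) := by
      ext M
      rw [Set.Finite.mem_toFinset, Finset.mem_filter, mem_maxMatchings,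
        MMset_char_pq hD hSC h3 hp hq hne hpnb]
      tauto
    unfold mu
    rw [hsetF]
    have hbeta : beta A p q =
        -(A p (pnb (DA A) p) * A (pnb (DA A) p) (pnb (DA A) q) * A (pnb (DA A) q) q) := by
      unfold beta
      rw [if_pos hmm, hch]
      simp [pathProd]
      ring
    rw [hbeta, Svw]
    congr 1
    apply Finset.sum_congr rfl
    intro M hM
    have hmax : IsMaxMatching (DA A) M := mem_maxMatchings.1 (Finset.mem_filter.1 hM).1
    unfold betaBar
    rw [hch]
    have hvwnm : s(pnb (DA A) p, pnb (DA A) q) ∉ M := nonpend_edge_not_mem hD hSC h3 hmax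
      (pnb_not_pendant hD hSC h3 hp) (pnb_not_pendant hD hSC h3 hq)
    have hCE : chainEdges [p, pnb (DA A) p, pnb (DA A) q, q] =
        [s(pnb (DA A) p, p), s(pnb (DA A) p, pnb (DA A) q), s(pnb (DA A) q, q)] := by
      rw [show chainEdges [p, pnb (DA A) p, pnb (DA A) q, q] =
        [s(p, pnb (DA A) p), s(pnb (DA A) p, pnb (DA A) q), s(pnb (DA A) q, q)] from rfl,
        Sym2.eq_swap]
    rw [hCE]
    congr 1
    ext e
    simp only [Finset.mem_filter, Finset.mem_erase, List.mem_cons,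
      List.not_mem_nil, or_false, not_or, List.mem_singleton]
    constructor
    · rintro ⟨heM, h1, h2, h3⟩
      exact ⟨h3, h1, heM⟩
    · rintro ⟨h3, h1, heM⟩
      exact ⟨heM, h1, fun hh => hvwnm (hh ▸ heM), h3⟩
  · -- not adjacent: both sides vanish
    have hnm : ¬ MaxMatchable A p q := by
      intro hmm
      rcases matchable_cases hD hSC h3 hmm with ⟨-, hnq, -⟩ | ⟨-, hnp, -⟩ |
        ⟨-, -, -, -, hadj'⟩
      · exact hnq hq
      · exact hnp hp
      · exact hadj hadj'
    rw [mu_zero hnm, A_eq_zero_of_not_adj hD hadj]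
    ring


end BABaux

namespace BABaux


open scoped Classical

variable {n : ℕ} {A : Matrix (Fin n) (Fin n) ℝ}

lemma matchable_of_ne {B : Matrix (Fin n) (Fin n) ℝ}
    (hB : ∀ i j, B i j = mu A i j / Delta A) {i j : Fin n} (h : B i j ≠ 0) :
    MaxMatchable A i j := by
  by_contra hnm
  exact h (by rw [hB i j, mu_zero hnm, zero_div])

lemma mu_zero_pp (hD : InClassD (DA A)) (hSC : StronglyConnected (DA A)) (h3 : 3 ≤ n)
    {i l : Fin n} (hpi : Pendant (DA A) i) (hpl : Pendant (DA A) l)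
    (heq : pnb (DA A) i = pnb (DA A) l) : mu A i l = 0 := by
  apply mu_zero
  intro hmm
  rcases matchable_cases hD hSC h3 hmm with ⟨-, hnl, -⟩ | ⟨-, hni, -⟩ | ⟨-, -, -, hpnb, -⟩
  · exact hnl hpl
  · exact hni hpi
  · exact hpnb heq

lemma BA_nonpend_row (hD : InClassD (DA A)) (hSC : StronglyConnected (DA A)) (h3 : 3 ≤ n)
    (hΔ : Delta A ≠ 0) {B : Matrix (Fin n) (Fin n) ℝ}
    (hB : ∀ i j, B i j = mu A i j / Delta A) {i k : Fin n} (hi : ¬ Pendant (DA A) i) :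
    (B * A) i k = if k = i then 1 else 0 := by
  rw [Matrix.mul_apply]
  -- analysis of nonzero terms
  have hstruct : ∀ l : Fin n, B i l * A l k ≠ 0 →
      Pendant (DA A) l ∧ pnb (DA A) l = i ∧ Adjd (DA A) i l ∧ k = i := by
    intro l hne
    have hBl : B i l ≠ 0 := fun h => hne (by rw [h, zero_mul])
    have hAl : A l k ≠ 0 := fun h => hne (by rw [h, mul_zero])
    have hmm := matchable_of_ne hB hBl
    rcases matchable_cases hD hSC h3 hmm with ⟨hpi, -, -⟩ | ⟨hpl, -, hil⟩ |
      ⟨hpi, -, -, -, -⟩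
    · exact absurd hpi hi
    · have hadj : Adjd (DA A) i l := by rw [hil]; exact adjd_symm (pnb_adj hpl)
      have hk : k = pnb (DA A) l := pnb_eq hpl (adj_of_A_ne hD hAl)
      exact ⟨hpl, hil.symm, hadj, hk.trans hil.symm⟩
    · exact absurd hpi hi
  by_cases hk : k = i
  · rw [if_pos hk, hk]
    have hres : ∀ l ∈ Finset.univ, B i l * A l i ≠ 0 →
        (Adjd (DA A) i l ∧ Pendant (DA A) l) := by
      intro l _ hne
      have hBl : B i l ≠ 0 := fun h => hne (by rw [h, zero_mul])
      have hAl : A l i ≠ 0 := fun h => hne (by rw [h, mul_zero])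
      have hmm := matchable_of_ne hB hBl
      rcases matchable_cases hD hSC h3 hmm with ⟨hpi, -, -⟩ | ⟨hpl, -, hil⟩ |
        ⟨hpi, -, -, -, -⟩
      · exact absurd hpi hi
      · exact ⟨by rw [hil]; exact adjd_symm (pnb_adj hpl), hpl⟩
      · exact absurd hpi hi
    rw [← Finset.sum_filter_of_ne hres]
    have hpf : Finset.univ.filter (fun l => Adjd (DA A) i l ∧ Pendant (DA A) l) = pf A i := rfl
    rw [hpf]
    have hterm : ∀ l ∈ pf A i, B i l * A l i =
        A i l * A l i * Sv A i l / Delta A := by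
      intro l hl
      rw [mem_pf] at hl
      have hpnbl : pnb (DA A) l = i := (pnb_eq hl.2 (adjd_symm hl.1)).symm
      have := mu_vp hD hSC h3 hl.2
      rw [hpnbl] at this
      rw [hB i l, this]
      ring
    rw [Finset.sum_congr rfl hterm, ← Finset.sum_div, I1 hD hSC h3 hi, div_self hΔ]
  · rw [if_neg hk]
    apply Finset.sum_eq_zero
    intro l _
    by_contra hne
    exact hk (hstruct l hne).2.2.2

lemma BA_pend_row (hD : InClassD (DA A)) (hSC : StronglyConnected (DA A)) (h3 : 3 ≤ n)
    (hΔ : Delta A ≠ 0) {B : Matrix (Fin n) (Fin n) ℝ}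
    (hB : ∀ i j, B i j = mu A i j / Delta A) {i k : Fin n} (hi : Pendant (DA A) i) :
    (B * A) i k = if Pendant (DA A) k
      then A i (pnb (DA A) i) * A (pnb (DA A) i) k * Sv A (pnb (DA A) i) i / Delta A
      else 0 := by
  have hvnp : ¬ Pendant (DA A) (pnb (DA A) i) := pnb_not_pendant hD hSC h3 hi
  rw [Matrix.mul_apply]
  -- structure of nonzero terms: l = pnb i, or l pendant with pnb l = k
  have hstruct : ∀ l : Fin n, B i l * A l k ≠ 0 →
      (l = pnb (DA A) i ∨ (Pendant (DA A) l ∧ pnb (DA A) l = k ∧ l ≠ i ∧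
        pnb (DA A) l ≠ pnb (DA A) i ∧ Adjd (DA A) l k)) := by
    intro l hne
    have hBl : B i l ≠ 0 := fun h => hne (by rw [h, zero_mul])
    have hAl : A l k ≠ 0 := fun h => hne (by rw [h, mul_zero])
    have hadlk : Adjd (DA A) l k := adj_of_A_ne hD hAl
    have hmm := matchable_of_ne hB hBl
    rcases matchable_cases hD hSC h3 hmm with ⟨-, -, hl⟩ | ⟨hpl, hni, -⟩ |
      ⟨-, hpl, hil, hpnb, -⟩
    · exact Or.inl hl
    · exact absurd hi hni
    · have hk : k = pnb (DA A) l := pnb_eq hpl hadlk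
      exact Or.inr ⟨hpl, hk.symm, fun h => hil h.symm, fun h => hpnb h.symm, hadlk⟩
  by_cases hk : Pendant (DA A) k
  · rw [if_pos hk]
    rw [Finset.sum_eq_single (pnb (DA A) i)]
    · rw [hB i (pnb (DA A) i), mu_pv hD hSC h3 hi]
      ring
    · intro l _ hlv
      by_contra hne
      rcases hstruct l hne with h | ⟨hpl, hpnbl, -, -, -⟩
      · exact hlv h
      · exact (pnb_not_pendant hD hSC h3 hpl) (by rw [hpnbl]; exact hk)
    · intro h
      exact absurd (Finset.mem_univ _) h
  · rw [if_neg hk]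
    -- restrict the sum
    have hres : ∀ l ∈ Finset.univ, B i l * A l k ≠ 0 →
        (l = pnb (DA A) i ∨ (Adjd (DA A) k l ∧ Pendant (DA A) l)) := by
      intro l _ hne
      rcases hstruct l hne with h | ⟨hpl, -, -, -, hadlk⟩
      · exact Or.inl h
      · exact Or.inr ⟨adjd_symm hadlk, hpl⟩
    rw [← Finset.sum_filter_of_ne hres]
    have hsplit : Finset.univ.filter
        (fun l => l = pnb (DA A) i ∨ (Adjd (DA A) k l ∧ Pendant (DA A) l)) =
        insert (pnb (DA A) i) (pf A k) := by
      ext l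
      simp [pf, mem_pf, or_comm]
    rw [hsplit, Finset.sum_insert (by
      rw [mem_pf]
      rintro ⟨-, hpv⟩
      exact hvnp hpv)]
    by_cases hkv : k = pnb (DA A) i
    · -- diagonal-type case: A v v = 0 and all pendant terms vanish
      subst hkv
      have h1 : A (pnb (DA A) i) (pnb (DA A) i) = 0 := A_diag hD _
      rw [h1, mul_zero, zero_add]
      apply Finset.sum_eq_zero
      intro l hl
      rw [mem_pf] at hl
      have hpnbl : pnb (DA A) l = pnb (DA A) i := (pnb_eq hl.2 (adjd_symm hl.1)).symm
      rw [hB i l, mu_zero_pp hD hSC h3 hi hl.2 hpnbl.symm, zero_div, zero_mul]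
    · -- off-diagonal: cancellation via I2
      have hterm : ∀ l ∈ pf A k, B i l * A l k =
          (-(A i (pnb (DA A) i) * A (pnb (DA A) i) k) / Delta A) *
            (A k l * A l k * Svw A (pnb (DA A) i) i k l) := by
        intro l hl
        rw [mem_pf] at hl
        have hpnbl : pnb (DA A) l = k := (pnb_eq hl.2 (adjd_symm hl.1)).symm
        have hpnb_ne : pnb (DA A) i ≠ pnb (DA A) l := by rw [hpnbl]; exact fun h => hkv h.symm
        have hnei : i ≠ l := by
          intro h; exact hpnb_ne (by rw [h])
        have := mu_pq hD hSC h3 hi hl.2 hnei hpnb_ne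
        rw [hpnbl] at this
        rw [hB i l, this, Svw_comm (v := pnb (DA A) i) (p := i) (u := k) (q := l)]
        ring
      rw [Finset.sum_congr rfl hterm, ← Finset.mul_sum]
      have hI2' : ∑ l ∈ pf A k, A k l * A l k * Svw A (pnb (DA A) i) i k l
          = Sv A (pnb (DA A) i) i := by
        rw [← I2 hD hSC h3 hk (fun h => hkv h) (adjd_symm (pnb_adj hi)) hi]
        apply Finset.sum_congr rfl
        intro l _
        rw [Svw_comm]
      rw [hI2', hB i (pnb (DA A) i), mu_pv hD hSC h3 hi]
      ring


end BABaux

namespace BABaux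


open scoped Classical

variable {n : ℕ} {A : Matrix (Fin n) (Fin n) ℝ}

lemma mu_zero_pnon (hD : InClassD (DA A)) (hSC : StronglyConnected (DA A)) (h3 : 3 ≤ n)
    {k j : Fin n} (hk : Pendant (DA A) k) (hj : ¬ Pendant (DA A) j)
    (hjv : j ≠ pnb (DA A) k) : mu A k j = 0 := by
  apply mu_zero
  intro hmm
  rcases matchable_cases hD hSC h3 hmm with ⟨-, -, h⟩ | ⟨hpj, -, -⟩ | ⟨-, hpj, -, -, -⟩
  · exact hjv h
  · exact hj hpj
  · exact hj hpj

lemma BAB_nonpend (hD : InClassD (DA A)) (hSC : StronglyConnected (DA A)) (h3 : 3 ≤ n)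
    (hΔ : Delta A ≠ 0) {B : Matrix (Fin n) (Fin n) ℝ}
    (hB : ∀ i j, B i j = mu A i j / Delta A) {i j : Fin n} (hi : ¬ Pendant (DA A) i) :
    (B * A * B) i j = B i j := by
  rw [Matrix.mul_apply]
  have hrw : ∀ l ∈ Finset.univ, (B * A) i l * B l j = (if l = i then 1 else 0) * B l j :=
    fun l _ => by rw [BA_nonpend_row hD hSC h3 hΔ hB hi]
  rw [Finset.sum_congr rfl hrw, Finset.sum_eq_single i]
  · rw [if_pos rfl, one_mul]
  · intro l _ hl
    rw [if_neg hl, zero_mul]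
  · intro h
    exact absurd (Finset.mem_univ _) h

lemma BAB_pend (hD : InClassD (DA A)) (hSC : StronglyConnected (DA A)) (h3 : 3 ≤ n)
    (hΔ : Delta A ≠ 0) {B : Matrix (Fin n) (Fin n) ℝ}
    (hB : ∀ i j, B i j = mu A i j / Delta A) {i j : Fin n} (hi : Pendant (DA A) i) :
    (B * A * B) i j = B i j := by
  have hvnp : ¬ Pendant (DA A) (pnb (DA A) i) := pnb_not_pendant hD hSC h3 hi
  have hadjvi : Adjd (DA A) (pnb (DA A) i) i := adjd_symm (pnb_adj hi)
  rw [Matrix.mul_apply]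
  have hrw : ∀ k ∈ Finset.univ, (B * A) i k * B k j =
      (if Pendant (DA A) k
        then A i (pnb (DA A) i) * A (pnb (DA A) i) k * Sv A (pnb (DA A) i) i / Delta A
        else 0) * B k j :=
    fun k _ => by rw [BA_pend_row hD hSC h3 hΔ hB hi]
  rw [Finset.sum_congr rfl hrw]
  have hres : ∀ k ∈ Finset.univ,
      (if Pendant (DA A) k
        then A i (pnb (DA A) i) * A (pnb (DA A) i) k * Sv A (pnb (DA A) i) i / Delta A
        else 0) * B k j ≠ 0 →
      (Adjd (DA A) (pnb (DA A) i) k ∧ Pendant (DA A) k) := by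
    intro k _ hne
    by_cases hk : Pendant (DA A) k
    · rw [if_pos hk] at hne
      refine ⟨?_, hk⟩
      have hAvk : A (pnb (DA A) i) k ≠ 0 := by
        intro h
        exact hne (by rw [h]; ring)
      exact adj_of_A_ne hD hAvk
    · rw [if_neg hk, zero_mul] at hne
      exact absurd rfl hne
  rw [← Finset.sum_filter_of_ne hres]
  have hpf : Finset.univ.filter
      (fun k => Adjd (DA A) (pnb (DA A) i) k ∧ Pendant (DA A) k) = pf A (pnb (DA A) i) := rfl
  rw [hpf]
  have hterm0 : ∀ k ∈ pf A (pnb (DA A) i),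
      (if Pendant (DA A) k
        then A i (pnb (DA A) i) * A (pnb (DA A) i) k * Sv A (pnb (DA A) i) i / Delta A
        else 0) * B k j =
      (A i (pnb (DA A) i) * A (pnb (DA A) i) k * Sv A (pnb (DA A) i) i / Delta A) * B k j := by
    intro k hk
    rw [mem_pf] at hk
    rw [if_pos hk.2]
  rw [Finset.sum_congr rfl hterm0]
  by_cases hj : Pendant (DA A) j
  · by_cases hju : pnb (DA A) j = pnb (DA A) i
    · -- both pendant on the same stem: everything vanishes
      have hz : ∀ k ∈ pf A (pnb (DA A) i),
          (A i (pnb (DA A) i) * A (pnb (DA A) i) k * Sv A (pnb (DA A) i) i / Delta A)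
            * B k j = 0 := by
        intro k hk
        rw [mem_pf] at hk
        have hpnbk : pnb (DA A) k = pnb (DA A) i := (pnb_eq hk.2 (adjd_symm hk.1)).symm
        rw [hB k j, mu_zero_pp hD hSC h3 hk.2 hj (hpnbk.trans hju.symm), zero_div, mul_zero]
      rw [Finset.sum_eq_zero hz, hB i j,
        mu_zero_pp hD hSC h3 hi hj hju.symm, zero_div]
    · -- generic two-pendant case, via the product identity
      have hunp : ¬ Pendant (DA A) (pnb (DA A) j) := pnb_not_pendant hD hSC h3 hj
      have hadjuj : Adjd (DA A) (pnb (DA A) j) j := adjd_symm (pnb_adj hj)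
      have hvu : pnb (DA A) i ≠ pnb (DA A) j := fun h => hju h.symm
      have hterm : ∀ k ∈ pf A (pnb (DA A) i),
          (A i (pnb (DA A) i) * A (pnb (DA A) i) k * Sv A (pnb (DA A) i) i / Delta A)
            * B k j =
          (-(A i (pnb (DA A) i) * Sv A (pnb (DA A) i) i * A (pnb (DA A) i) (pnb (DA A) j) *
            A (pnb (DA A) j) j) / (Delta A * Delta A)) *
          (A (pnb (DA A) i) k * A k (pnb (DA A) i) *
            Svw A (pnb (DA A) i) k (pnb (DA A) j) j) := by
        intro k hk
        rw [mem_pf] at hk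
        have hpnbk : pnb (DA A) k = pnb (DA A) i := (pnb_eq hk.2 (adjd_symm hk.1)).symm
        have hkj : k ≠ j := by
          intro h
          exact hju (by rw [← h, hpnbk])
        have hpnbkj : pnb (DA A) k ≠ pnb (DA A) j := by
          rw [hpnbk]; exact hvu
        have hmu := mu_pq hD hSC h3 hk.2 hj hkj hpnbkj
        rw [hpnbk] at hmu
        rw [hB k j, hmu]
        ring
      rw [Finset.sum_congr rfl hterm, ← Finset.mul_sum,
        I2 hD hSC h3 hvnp hvu hadjuj hj]
      have hne_ij : i ≠ j := by
        intro h
        exact hvu (by rw [h])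
      have hmuij := mu_pq hD hSC h3 hi hj hne_ij hvu
      have key := prod_identity hD hSC h3 hvnp hadjvi hi hunp hvu hadjuj hj
      rw [hB i j, hmuij]
      have trick : (-(A i (pnb (DA A) i) * Sv A (pnb (DA A) i) i *
          A (pnb (DA A) i) (pnb (DA A) j) * A (pnb (DA A) j) j) / (Delta A * Delta A)) *
          Sv A (pnb (DA A) j) j =
          (-(A i (pnb (DA A) i) * A (pnb (DA A) i) (pnb (DA A) j) * A (pnb (DA A) j) j) *
            (Sv A (pnb (DA A) i) i * Sv A (pnb (DA A) j) j)) / (Delta A * Delta A) := by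
        ring
      rw [trick, key]
      field_simp
  · by_cases hjv : j = pnb (DA A) i
    · -- j is the stem of i
      subst hjv
      have hterm : ∀ k ∈ pf A (pnb (DA A) i),
          (A i (pnb (DA A) i) * A (pnb (DA A) i) k * Sv A (pnb (DA A) i) i / Delta A)
            * B k (pnb (DA A) i) =
          (A i (pnb (DA A) i) * Sv A (pnb (DA A) i) i / (Delta A * Delta A)) *
          (A (pnb (DA A) i) k * A k (pnb (DA A) i) * Sv A (pnb (DA A) i) k) := by
        intro k hk
        rw [mem_pf] at hk
        have hpnbk : pnb (DA A) k = pnb (DA A) i := (pnb_eq hk.2 (adjd_symm hk.1)).symm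
        have hmu := mu_pv hD hSC h3 hk.2
        rw [hpnbk] at hmu
        rw [hB k (pnb (DA A) i), hmu]
        ring
      rw [Finset.sum_congr rfl hterm, ← Finset.mul_sum, I1 hD hSC h3 hvnp,
        hB i (pnb (DA A) i), mu_pv hD hSC h3 hi]
      field_simp
    · -- j non-pendant and not the stem: everything vanishes
      have hz : ∀ k ∈ pf A (pnb (DA A) i),
          (A i (pnb (DA A) i) * A (pnb (DA A) i) k * Sv A (pnb (DA A) i) i / Delta A)
            * B k j = 0 := by
        intro k hk
        rw [mem_pf] at hk
        have hpnbk : pnb (DA A) k = pnb (DA A) i := (pnb_eq hk.2 (adjd_symm hk.1)).symm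
        have hjk : j ≠ pnb (DA A) k := by rw [hpnbk]; exact hjv
        rw [hB k j, mu_zero_pnon hD hSC h3 hk.2 hj hjk, zero_div, mul_zero]
      rw [Finset.sum_eq_zero hz, hB i j, mu_zero_pnon hD hSC h3 hi hj hjv, zero_div]

theorem main3 (hD : InClassD (DA A)) (hSC : StronglyConnected (DA A)) (h3 : 3 ≤ n)
    (hΔ : Delta A ≠ 0) {B : Matrix (Fin n) (Fin n) ℝ}
    (hB : ∀ i j, B i j = mu A i j / Delta A) : B * A * B = B := by
  ext i j
  by_cases hi : Pendant (DA A) i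
  · exact BAB_pend hD hSC h3 hΔ hB hi
  · exact BAB_nonpend hD hSC h3 hΔ hB hi


end BABaux

namespace BABaux


open scoped Classical

lemma main2 {A : Matrix (Fin 2) (Fin 2) ℝ} (hD : InClassD (DA A))
    (hSC : StronglyConnected (DA A)) (hΔ : Delta A ≠ 0)
    {B : Matrix (Fin 2) (Fin 2) ℝ} (hB : ∀ i j, B i j = mu A i j / Delta A) :
    B * A * B = B := by
  have hG01 : DA A 0 1 := by
    rcases Relation.ReflTransGen.cases_head (hSC 0 1) with h | ⟨c, hc, -⟩
    · exact absurd h (by decide)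
    · fin_cases c
      · exact absurd hc (hD.1.1 0)
      · exact hc
  have hG10 : DA A 1 0 := hD.1.2 _ _ hG01
  have hadj : Adjd (DA A) 0 1 := ⟨by decide, hG01, hG10⟩
  have hedge : ∀ e, IsEdge (DA A) e → e = s(0, 1) := by
    rintro e ⟨i, j, rfl, hij⟩
    have hne : i ≠ j := hij.1
    fin_cases i <;> fin_cases j
    · exact absurd rfl hne
    · rfl
    · exact Sym2.eq_swap
    · exact absurd rfl hne
  have hsub : ∀ M, IsMatching (DA A) M → M ⊆ {s(0, 1)} := by
    intro M hM e he
    rw [Finset.mem_singleton]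
    exact hedge e (hM.1 e he)
  have hMone : IsMatching (DA A) {s(0, 1)} := by
    constructor
    · intro e he
      rw [Finset.mem_singleton] at he
      subst he
      exact isEdge_mk.2 hadj
    · intro e he f hf hef
      rw [Finset.mem_singleton] at he hf
      exact absurd (he.trans hf.symm) hef
  have hmaxiff : ∀ M, IsMaxMatching (DA A) M ↔ M = {s(0, 1)} := by
    intro M
    constructor
    · intro hM
      rcases Finset.subset_singleton_iff.1 (hsub M hM.1) with rfl | rfl
      · exfalso
        have := hM.2 {s(0, 1)} hMone
        simp at this
      · rfl
    · rintro rfl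
      refine ⟨hMone, fun M' hM' => ?_⟩
      have := Finset.card_le_card (hsub M' hM')
      simpa using this
  have hmaxM : maxMatchings A = {{s(0, 1)}} := by
    ext M
    rw [mem_maxMatchings, hmaxiff, Finset.mem_singleton]
  have hΔeq : Delta A = A 0 1 * A 1 0 := by
    rw [show Delta A = ∑ M ∈ maxMatchings A, matchProd A M from rfl, hmaxM,
      Finset.sum_singleton, show matchProd A {s(0, 1)} = ∏ e ∈ {s(0, 1)}, cycProd A e from rfl,
      Finset.prod_singleton, cycProd_mk]
  have huniq : ∀ (i j : Fin 2) c, IsCycleChainBtw (DA A) i j c → c = [i, j] := by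
    rintro i j c ⟨⟨hnd, hlen, -⟩, hh, hl⟩
    have hle : c.length ≤ 2 := by
      have := List.Nodup.length_le_card hnd
      simpa using this
    have hlen2 : c.length = 2 := by omega
    obtain ⟨a, b, rfl⟩ := List.length_eq_two.1 hlen2
    have h1 : a = i := by simpa using hh
    have h2 : b = j := by simpa using hl
    rw [h1, h2]
  -- μ on the diagonal vanishes
  have hmmd : ∀ i : Fin 2, ¬ MaxMatchable A i i := by
    rintro i ⟨M, -, c, hbtw, -⟩
    have hc := huniq i i c hbtw
    rw [hc] at hbtw
    have := hbtw.1.1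
    simp at this
  -- off-diagonal μ
  have hmuoff : ∀ i j : Fin 2, i ≠ j → Adjd (DA A) i j → mu A i j = A i j := by
    intro i j hij hadj'
    have hmemM : s(i, j) ∈ ({s(0, 1)} : Finset (Sym2 (Fin 2))) := by
      rw [Finset.mem_singleton]
      exact hedge _ ⟨i, j, rfl, hadj'⟩
    obtain ⟨hbtw, halt⟩ := altchain_short hadj' hmemM
    have hMMmem : ({s(0, 1)} : Finset (Sym2 (Fin 2))) ∈ MMset A i j :=
      ⟨(hmaxiff _).2 rfl, [i, j], hbtw, halt⟩
    have hmm : MaxMatchable A i j := ⟨{s(0, 1)}, hMMmem⟩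
    have hMMeq : MMset A i j = {({s(0, 1)} : Finset (Sym2 (Fin 2)))} := by
      ext M
      constructor
      · rintro ⟨hmax, -⟩
        exact (hmaxiff M).1 hmax
      · rintro rfl
        exact hMMmem
    have hMMeq' : (MMset A i j).toFinite.toFinset = {{s(0, 1)}} := by
      ext M
      rw [Set.Finite.mem_toFinset, hMMeq]
      simp
    have hex : ∃ c, IsCycleChainBtw (DA A) i j c ∧ ∃ M ∈ MMset A i j, IsAltChain M c :=
      ⟨[i, j], hbtw, {s(0, 1)}, hMMmem, halt⟩
    have hch : theChain A i j = [i, j] := by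
      unfold theChain
      rw [dif_pos hex]
      exact huniq i j _ hex.choose_spec.1
    unfold mu
    rw [hMMeq', Finset.sum_singleton]
    have hbeta : beta A i j = A i j := by
      unfold beta
      rw [if_pos hmm, hch]
      simp [pathProd]
    rw [hbeta]
    unfold betaBar
    rw [hch]
    have hfilter : ({s(0, 1)} : Finset (Sym2 (Fin 2))).filter
        (fun e => e ∉ chainEdges [i, j]) = ∅ := by
      have hsij : s(0, 1) = s(i, j) := (hedge _ ⟨i, j, rfl, hadj'⟩).symm
      rw [Finset.filter_singleton, if_neg]
      simp [chainEdges, hsij]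
    rw [hfilter, Finset.prod_empty, mul_one]
  have hadj10 : Adjd (DA A) 1 0 := adjd_symm hadj
  have hA00 : A 0 0 = 0 := A_diag hD 0
  have hA11 : A 1 1 = 0 := A_diag hD 1
  have hB00 : B 0 0 = 0 := by rw [hB, mu_zero (hmmd 0), zero_div]
  have hB11 : B 1 1 = 0 := by rw [hB, mu_zero (hmmd 1), zero_div]
  have hB01 : B 0 1 = A 0 1 / Delta A := by rw [hB, hmuoff 0 1 (by decide) hadj]
  have hB10 : B 1 0 = A 1 0 / Delta A := by rw [hB, hmuoff 1 0 (by decide) hadj10]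
  have hA01 : A 0 1 ≠ 0 := hG01
  have hA10 : A 1 0 ≠ 0 := hG10
  ext i j
  fin_cases i <;> fin_cases j <;>
    · simp only [Fin.mk_zero, Fin.mk_one, Matrix.mul_apply, Fin.sum_univ_two]
      simp only [hA00, hA11, hB00, hB11, hB01, hB10, hΔeq]
      field_simp
      try ring


end BABaux

/-- Lemma 2.10: with `B = (μ_{ij}/Δ_A)`, one has `BAB = B`. -/
theorem BAB_eq_B {n : ℕ} (A : Matrix (Fin n) (Fin n) ℝ)
    (hD : InClassD (DA A)) (hSC : StronglyConnected (DA A)) (hΔ : Delta A ≠ 0)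
    (B : Matrix (Fin n) (Fin n) ℝ) (hB : ∀ i j, B i j = mu A i j / Delta A) :
    B * A * B = B := by
  revert hB B hΔ hSC hD A
  rcases n with _ | _ | _ | m
  · intro A hD hSC hΔ B hB
    ext i j
    exact i.elim0
  · intro A hD hSC hΔ B hB
    exfalso
    haveI : Subsingleton (Fin (0 + 1)) := Fin.subsingleton_one
    have h0 : ¬ Pendant (DA A) 0 := by
      rintro ⟨j, hj, -⟩
      exact hj.1 (Subsingleton.elim _ _)
    obtain ⟨j, hj, -⟩ := hD.2 0 h0
    exact hj.1 (Subsingleton.elim _ _)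
  · intro A hD hSC hΔ B hB
    exact BABaux.main2 hD hSC hΔ hB
  · intro A hD hSC hΔ B hB
    exact BABaux.main3 hD hSC (by omega) hΔ hB
end
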